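/- Let (Q,S) be a QP with S of the form W = Σ_{k=1}^N a_k b_k + Σ_{k=1}^N (a_k u_k + b_k v_k) + W' where a₁,b₁,…,a_N,b_N are 2N distinct arrows with each a_k b_k a 2-cycle, u_k, v_k ∈ 𝔪^ℓ for some ℓ ≥ 2, and W' ∈ 𝔪³ involves none of the arrows a_k, b_k. Define the algebra automorphism f of ℂ⟨⟨Q⟩⟩ by f(a_k) = a_k − v_k, f(b_k) = b_k − u_k and f(c) = c for all other arrows c. Then f(W) is cyclically equivalent to a potential of the same form but with the new correction terms u'_k, v'_k lying in 𝔪^{ℓ'} for some ℓ' > ℓ. -/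

import Mathlib

open scoped Classical

/-- A quiver on vertex set `V`: a set of arrows with tail (`src`) and head (`tgt`) maps. -/
structure Quiv (V : Type) where
  A : Type
  src : A → V
  tgt : A → V

namespace Quiv

variable {V : Type} (Q : Quiv V)

/-- `Comp a b` means the arrow `a` can be composed after `b` (t(a) = h(b)). -/
def Comp (a b : Q.A) : Prop := Q.src a = Q.tgt b

/-- Positive-length paths: nonempty lists `[α₁, …, α_ℓ]` of composable arrows
(function-composition order: `t(α_j) = h(α_{j+1})`). -/
abbrev PathsPos := {l : List Q.A // l ≠ [] ∧ l.Chain' Q.Comp}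

/-- Paths: either a lazy path `e_i` at a vertex `i`, or a positive-length path. -/
abbrev Pth := V ⊕ Q.PathsPos

namespace Pth

variable {Q}

/-- The length of a path. -/
def length : Q.Pth → ℕ := Sum.elim (fun _ => 0) (fun l => l.1.length)

/-- The tail `t(p)` (starting vertex) of a path. -/
def src : Q.Pth → V := Sum.elim id (fun l => Q.src (l.1.getLast l.2.1))

/-- The head `h(p)` (ending vertex) of a path. -/
def tgt : Q.Pth → V := Sum.elim id (fun l => Q.tgt (l.1.head l.2.1))

end Pth

/-- The underlying vector space of the complete path algebra ℂ⟨⟨Q⟩⟩: all possibly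
infinite ℂ-linear combinations of paths, encoded as coefficient functions. -/
abbrev CPA := Q.Pth → ℂ

/-- The coefficient of a list of arrows, viewed as a path (with `x` as fallback vertex
for the empty list). -/
noncomputable def coefAt (u : Q.CPA) (x : V) (l : List Q.A) : ℂ :=
  if h : l = [] then u (Sum.inl x)
  else if hc : l.Chain' Q.Comp then u (Sum.inr ⟨l, h, hc⟩) else 0

/-- The multiplication of the (complete) path algebra, induced by concatenation of
paths: the coefficient of a path `p` in `conv u v` is the (finite) sum over all
splittings `p = p₁ p₂` of `u(p₁) * v(p₂)`. -/
noncomputable def conv (u v : Q.CPA) : Q.CPA := fun p =>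
  match p with
  | Sum.inl x => u (Sum.inl x) * v (Sum.inl x)
  | Sum.inr l => ∑ n ∈ Finset.range (l.1.length + 1),
      coefAt Q u (Q.tgt (l.1.head l.2.1)) (l.1.take n) *
      coefAt Q v (Q.src (l.1.getLast l.2.1)) (l.1.drop n)

/-- The identity element `∑ i e_i` of the path algebra. -/
noncomputable def one : Q.CPA := Sum.elim (fun _ => 1) (fun _ => 0)

/-- The idempotent `e_i` (the length-0 path at vertex `i`). -/
noncomputable def idem (i : V) : Q.CPA := fun p => if p = Sum.inl i then 1 else 0

/-- The arrow `a`, viewed as an element of the path algebra. -/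
noncomputable def arrowδ (a : Q.A) : Q.CPA := fun p =>
  if p = Sum.inr ⟨[a], List.cons_ne_nil a [], List.isChain_singleton a⟩ then 1 else 0

/-- A path, viewed as an element of the path algebra. -/
noncomputable def pathδ (p₀ : Q.Pth) : Q.CPA := fun p => if p = p₀ then 1 else 0

/-- Elements of ℂ⟨⟨Q⟩⟩ with coefficients supported in bounded length, i.e. the
elements of the path algebra ℂ⟨Q⟩ = ⊕_{ℓ≥0} A^ℓ. -/
def Bounded (u : Q.CPA) : Prop := ∃ N : ℕ, ∀ p : Q.Pth, N ≤ p.length → u p = 0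

/-- A cycle is a positive-length path which starts and ends at the same vertex. -/
def IsCycle (p : Q.Pth) : Prop := 0 < p.length ∧ p.src = p.tgt

/-- A potential: a (possibly infinite) linear combination of cycles, no two of which
are rotations of each other. -/
def IsPotential (S : Q.CPA) : Prop :=
  (∀ p : Q.Pth, S p ≠ 0 → Q.IsCycle p) ∧
  ∀ l l' : Q.PathsPos, S (Sum.inr l) ≠ 0 → S (Sum.inr l') ≠ 0 → l.1 ~r l'.1 → l = l'

/-- The cyclic derivative with respect to the arrow `a`:
`∂_a(α₁…α_ℓ) = ∑_k δ_{a,α_k} α_{k+1}…α_ℓα₁…α_{k-1}`, extended by linearity and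
continuity.  The coefficient of a path `q` in `∂_a S` is the sum of the coefficients
in `S` of all rotations of the cycle `a·q`. -/
noncomputable def cycDer (a : Q.A) (S : Q.CPA) : Q.CPA := fun p =>
  match p with
  | Sum.inl x =>
      if Q.src a = x ∧ Q.tgt a = x then coefAt Q S x [a] else 0
  | Sum.inr l => ∑ m ∈ Finset.range (l.1.length + 1),
      coefAt Q S (Q.tgt a) ((a :: l.1).rotate m)

/-- The two-sided ideal generated by a subset of ℂ⟨⟨Q⟩⟩. -/
def idealGen (Sg : Set Q.CPA) : Set Q.CPA :=
  {x | ∃ (n : ℕ) (f g s : Fin n → Q.CPA), (∀ k, s k ∈ Sg) ∧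
    x = ∑ k, Q.conv (f k) (Q.conv (s k) (g k))}

/-- The closure of a subset of ℂ⟨⟨Q⟩⟩ in the 𝔪-adic topology. -/
def mAdicCl (T : Set Q.CPA) : Set Q.CPA :=
  {u | ∀ n : ℕ, ∃ v ∈ T, ∀ p : Q.Pth, p.length < n → u p = v p}

/-- The Jacobian ideal `J(S)`: the closure of the two-sided ideal generated by the
cyclic derivatives of `S`. -/
def jacobIdeal (S : Q.CPA) : Set Q.CPA :=
  Q.mAdicCl (Q.idealGen (Set.range fun a => Q.cycDer a S))

/-- The set of differences `c - c'` where `c` is a cycle and `c'` its rotation. -/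
def rotDiffs : Set Q.CPA :=
  {x | ∃ l l' : Q.PathsPos, Q.IsCycle (Sum.inr l) ∧ l'.1 = l.1.rotate 1 ∧
    x = Q.pathδ (Sum.inr l) - Q.pathδ (Sum.inr l')}

/-- Cyclic equivalence: `S - S'` lies in the closure of the span of the
rotation differences of cycles. -/
def CycEquiv (S S' : Q.CPA) : Prop :=
  S - S' ∈ Q.mAdicCl (Submodule.span ℂ Q.rotDiffs : Submodule ℂ Q.CPA)

end Quiv

namespace QPAux

open Quiv

variable {V : Type} {Q : Quiv V}

/-- Validity of a list as a positive path. -/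
def Valid (Q : Quiv V) (l : List Q.A) : Prop := l ≠ [] ∧ l.Chain' Q.Comp

def toPP (l : List Q.A) (h : Valid Q l) : Q.PathsPos := ⟨l, h.1, h.2⟩

/-- Coefficient of `x` at the list `l`. -/
noncomputable def atL (x : Q.CPA) (l : List Q.A) : ℂ :=
  if h : Valid Q l then x (Sum.inr (toPP l h)) else 0

/-- The delta function at the list `l` (zero if invalid). -/
noncomputable def pδ (Q : Quiv V) (l : List Q.A) : Q.CPA :=
  if h : Valid Q l then Q.pathδ (Sum.inr (toPP l h)) else 0

/-- List-level cycles. -/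
def IsCyc (Q : Quiv V) (l : List Q.A) : Prop :=
  ∃ h : l ≠ [], l.Chain' Q.Comp ∧ Q.src (l.getLast h) = Q.tgt (l.head h)

/-- `x` vanishes below length `n`. -/
def VanishLt (x : Q.CPA) (n : ℕ) : Prop := ∀ p : Q.Pth, p.length < n → x p = 0

lemma atL_eq (x : Q.CPA) (l : Q.PathsPos) : atL x l.1 = x (Sum.inr l) := by
  have hv : Valid Q l.1 := ⟨l.2.1, l.2.2⟩
  rw [atL, dif_pos hv]
  rfl

lemma pδ_apply (l : List Q.A) (h : Valid Q l) (p : Q.Pth) :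
    pδ Q l p = if p = Sum.inr (toPP l h) then 1 else 0 := by
  rw [pδ, dif_pos h]; rfl

lemma pδ_inl (l : List Q.A) (x : V) : pδ Q l (Sum.inl x) = 0 := by
  unfold pδ
  split
  · rw [Quiv.pathδ, if_neg (by simp)]
  · rfl

lemma pδ_inr (l : List Q.A) (m : Q.PathsPos) :
    pδ Q l (Sum.inr m) = if m.1 = l then 1 else 0 := by
  by_cases h : Valid Q l
  · rw [pδ_apply l h]
    by_cases he : m.1 = l
    · rw [if_pos he, if_pos (by apply congrArg; exact Subtype.ext he)]
    · rw [if_neg he, if_neg (by intro hc; apply he; injection hc with hc'; exact congrArg Subtype.val hc')]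
  · rw [pδ, dif_neg h, if_neg (by rintro rfl; exact h ⟨m.2.1, m.2.2⟩)]
    rfl

end QPAux

namespace QPAux2
open Quiv QPAux

variable {V : Type} {Q : Quiv V}

lemma coefAt_arrowδ (c : Q.A) (w : V) (m : List Q.A) :
    Q.coefAt (Q.arrowδ c) w m = if m = [c] then 1 else 0 := by
  unfold Quiv.coefAt
  by_cases h : m = []
  · rw [dif_pos h, if_neg (by rw [h]; simp), Quiv.arrowδ, if_neg (by simp)]
  · rw [dif_neg h]
    by_cases hc : m.Chain' Q.Comp
    · rw [dif_pos hc, Quiv.arrowδ]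
      by_cases he : m = [c]
      · rw [if_pos he, if_pos (by apply congrArg; exact Subtype.ext he)]
      · rw [if_neg he, if_neg (by intro hh; apply he; injection hh with h2; exact congrArg Subtype.val h2)]
    · rw [dif_neg hc, if_neg (by rintro rfl; exact hc (List.isChain_singleton c))]

lemma coefAt_idem (i : V) (w : V) (m : List Q.A) :
    Q.coefAt (Q.idem i) w m = if m = [] ∧ w = i then 1 else 0 := by
  unfold Quiv.coefAt
  by_cases h : m = []
  · rw [dif_pos h, Quiv.idem]
    by_cases hw : w = i
    · rw [if_pos (by simp [hw]), if_pos ⟨h, hw⟩]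
    · rw [if_neg (by simp [hw]), if_neg (by rintro ⟨-, h2⟩; exact hw h2)]
  · rw [dif_neg h, if_neg (by rintro ⟨h1, -⟩; exact h h1)]
    split <;> [rw [Quiv.idem, if_neg (by simp)]; rfl]

lemma coefAt_pδ (r : List Q.A) (w : V) (m : List Q.A) :
    Q.coefAt (pδ Q r) w m = if m = r ∧ Valid Q r then 1 else 0 := by
  unfold Quiv.coefAt
  by_cases h : m = []
  · rw [dif_pos h, pδ_inl, if_neg (by rintro ⟨rfl, hv⟩; exact hv.1 h)]
  · rw [dif_neg h]
    by_cases hc : m.Chain' Q.Comp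
    · rw [dif_pos hc, pδ_inr]
      by_cases he : m = r
      · rw [if_pos he, if_pos ⟨he, he ▸ ⟨h, hc⟩⟩]
      · rw [if_neg he, if_neg (by rintro ⟨h1, -⟩; exact he h1)]
    · rw [dif_neg hc, if_neg (by rintro ⟨rfl, hv⟩; exact hc hv.2)]

lemma coefAt_of_ne (x : Q.CPA) (w : V) (m : List Q.A) (h : m ≠ []) :
    Q.coefAt x w m = atL x m := by
  unfold Quiv.coefAt atL
  rw [dif_neg h]
  by_cases hc : m.Chain' Q.Comp
  · rw [dif_pos hc, dif_pos ⟨h, hc⟩]; rfl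
  · rw [dif_neg hc, dif_neg (by rintro ⟨-, h2⟩; exact hc h2)]

lemma coefAt_vanish {x : Q.CPA} {n : ℕ} (hx : VanishLt x n) (w : V) (m : List Q.A)
    (hm : m.length < n) : Q.coefAt x w m = 0 := by
  unfold Quiv.coefAt
  by_cases h : m = []
  · rw [dif_pos h]
    exact hx (Sum.inl w) (by show (0:ℕ) < n; exact Nat.lt_of_le_of_lt (Nat.zero_le _) (by simpa [h] using hm))
  · rw [dif_neg h]
    by_cases hc : m.Chain' Q.Comp
    · rw [dif_pos hc]; exact hx (Sum.inr ⟨m, h, hc⟩) hm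
    · rw [dif_neg hc]

end QPAux2

namespace QPAux3
open Quiv QPAux QPAux2

variable {V : Type} {Q : Quiv V}

lemma coefAt_add (x y : Q.CPA) (w : V) (m : List Q.A) :
    Q.coefAt (x + y) w m = Q.coefAt x w m + Q.coefAt y w m := by
  unfold Quiv.coefAt
  split
  · rfl
  · split
    · rfl
    · rw [add_zero]

lemma conv_add_left (x y z : Q.CPA) :
    Q.conv (x + y) z = Q.conv x z + Q.conv y z := by
  funext p
  cases p with
  | inl i =>
    show (x + y) (Sum.inl i) * z (Sum.inl i)
      = x (Sum.inl i) * z (Sum.inl i) + y (Sum.inl i) * z (Sum.inl i)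
    rw [Pi.add_apply]; ring
  | inr l =>
    show _ = Q.conv x z (Sum.inr l) + Q.conv y z (Sum.inr l)
    unfold Quiv.conv
    rw [← Finset.sum_add_distrib]
    exact Finset.sum_congr rfl fun n _ => by rw [coefAt_add]; ring

lemma conv_add_right (x y z : Q.CPA) :
    Q.conv x (y + z) = Q.conv x y + Q.conv x z := by
  funext p
  cases p with
  | inl i =>
    show x (Sum.inl i) * (y + z) (Sum.inl i)
      = x (Sum.inl i) * y (Sum.inl i) + x (Sum.inl i) * z (Sum.inl i)
    rw [Pi.add_apply]; ring
  | inr l =>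
    show _ = Q.conv x y (Sum.inr l) + Q.conv x z (Sum.inr l)
    unfold Quiv.conv
    rw [← Finset.sum_add_distrib]
    exact Finset.sum_congr rfl fun n _ => by rw [coefAt_add]; ring

lemma conv_sub_left (x y z : Q.CPA) :
    Q.conv (x - y) z = Q.conv x z - Q.conv y z := by
  have := conv_add_left (Q := Q) (x - y) y z
  rw [sub_add_cancel] at this
  rw [this]; abel

lemma conv_sub_right (x y z : Q.CPA) :
    Q.conv x (y - z) = Q.conv x y - Q.conv x z := by
  have := conv_add_right (Q := Q) x (y - z) z
  rw [sub_add_cancel] at this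
  rw [this]; abel

lemma conv_vanish {x y : Q.CPA} {m k : ℕ} (hx : VanishLt x m) (hy : VanishLt y k) :
    VanishLt (Q.conv x y) (m + k) := by
  intro p hp
  cases p with
  | inl i =>
    show x (Sum.inl i) * y (Sum.inl i) = 0
    rcases Nat.eq_zero_or_pos m with hm | hm
    · have hk : 0 < k := by omega
      rw [hy (Sum.inl i) hk, mul_zero]
    · rw [hx (Sum.inl i) hm, zero_mul]
  | inr l =>
    show (∑ n ∈ Finset.range (l.1.length + 1), _) = (0:ℂ)
    apply Finset.sum_eq_zero
    intro n hn
    rw [Finset.mem_range] at hn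
    have hlen : l.1.length < m + k := hp
    by_cases h1 : (l.1.take n).length < m
    · rw [coefAt_vanish hx _ _ h1, zero_mul]
    · have h2 : (l.1.drop n).length < k := by
        rw [List.length_take] at h1
        rw [List.length_drop]
        omega
      rw [coefAt_vanish hy _ _ h2, mul_zero]

lemma conv_arrow_left (c : Q.A) (y : Q.CPA) (l : Q.PathsPos) :
    Q.conv (Q.arrowδ c) y (Sum.inr l) =
      if l.1.head l.2.1 = c then Q.coefAt y (Q.src (l.1.getLast l.2.1)) l.1.tail else 0 := by
  obtain ⟨L, hne, hch⟩ := l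
  obtain ⟨hd, tl, rfl⟩ := List.exists_cons_of_ne_nil hne
  show (∑ n ∈ Finset.range ((hd :: tl).length + 1), _) = _
  rw [Finset.sum_eq_single_of_mem 1 (by simp)]
  · rw [coefAt_arrowδ]
    simp only [List.take_cons, List.take_zero, List.drop_succ_cons, List.drop_zero,
      List.head_cons, List.tail_cons]
    by_cases he : hd = c
    · rw [if_pos (by subst he; simp), one_mul]; exact (if_pos he).symm
    · rw [if_neg (by simp [he]), zero_mul]; exact (if_neg he).symm
  · intro n hn hn1
    rw [coefAt_arrowδ]
    rw [if_neg, zero_mul]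
    intro hc
    have := congrArg List.length hc
    simp only [List.length_take, List.length_cons, List.length_nil] at this
    rw [Finset.mem_range] at hn
    simp only [List.length_cons] at hn
    omega

lemma conv_arrow_right (c : Q.A) (y : Q.CPA) (l : Q.PathsPos) :
    Q.conv y (Q.arrowδ c) (Sum.inr l) =
      if l.1.getLast l.2.1 = c then Q.coefAt y (Q.tgt (l.1.head l.2.1)) l.1.dropLast else 0 := by
  obtain ⟨L0, hne, hch⟩ := l
  obtain ⟨L, x, rfl⟩ : ∃ L x, L0 = L ++ [x] := by
    rcases List.eq_nil_or_concat L0 with h | ⟨L, x, h⟩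
    · exact absurd h hne
    · exact ⟨L, x, by rw [h, List.concat_eq_append]⟩
  show (∑ n ∈ Finset.range ((L ++ [x]).length + 1), _) = _
  rw [Finset.sum_eq_single_of_mem L.length (by simp)]
  · rw [coefAt_arrowδ, List.drop_left, List.take_left]
    have hgl : (L ++ [x]).getLast (by simp) = x := by simp [List.getLast_append]
    rw [hgl, List.dropLast_concat]
    by_cases he : x = c
    · rw [if_pos (by rw [he]), if_pos he, mul_one]
    · rw [if_neg (by simp [he]), if_neg he, mul_zero]
  · intro n hn hn1
    rw [coefAt_arrowδ, if_neg, mul_zero]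
    intro hc
    have := congrArg List.length hc
    simp only [List.length_drop, List.length_append, List.length_cons, List.length_nil] at this
    rw [Finset.mem_range] at hn
    simp only [List.length_append, List.length_cons, List.length_nil] at hn
    omega

lemma conv_idem_left (i : V) (y : Q.CPA) (l : Q.PathsPos) :
    Q.conv (Q.idem i) y (Sum.inr l) =
      if Q.tgt (l.1.head l.2.1) = i then y (Sum.inr l) else 0 := by
  show (∑ n ∈ Finset.range (l.1.length + 1), _) = _
  rw [Finset.sum_eq_single_of_mem 0 (by simp)]
  · rw [coefAt_idem, List.take_zero, List.drop_zero, coefAt_of_ne _ _ _ l.2.1, atL_eq]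
    by_cases he : Q.tgt (l.1.head l.2.1) = i
    · rw [if_pos ⟨rfl, he⟩, if_pos he, one_mul]
    · rw [if_neg (by rintro ⟨-, h2⟩; exact he h2), if_neg he, zero_mul]
  · intro n hn hn1
    rw [coefAt_idem, if_neg, zero_mul]
    rintro ⟨h1, -⟩
    have := congrArg List.length h1
    rw [List.length_take] at this
    rw [Finset.mem_range] at hn
    have h0 : 0 < l.1.length := List.length_pos_iff.mpr l.2.1
    simp only [List.length_nil] at this
    omega

lemma conv_idem_right (i : V) (y : Q.CPA) (l : Q.PathsPos) :
    Q.conv y (Q.idem i) (Sum.inr l) =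
      if Q.src (l.1.getLast l.2.1) = i then y (Sum.inr l) else 0 := by
  show (∑ n ∈ Finset.range (l.1.length + 1), _) = _
  rw [Finset.sum_eq_single_of_mem l.1.length (by simp)]
  · rw [coefAt_idem, List.drop_length, List.take_length, coefAt_of_ne _ _ _ l.2.1, atL_eq]
    by_cases he : Q.src (l.1.getLast l.2.1) = i
    · rw [if_pos ⟨rfl, he⟩, if_pos he, mul_one]
    · rw [if_neg (by rintro ⟨-, h2⟩; exact he h2), if_neg he, mul_zero]
  · intro n hn hn1
    rw [coefAt_idem, if_neg, mul_zero]
    rintro ⟨h1, -⟩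
    have := congrArg List.length h1
    rw [List.length_drop] at this
    rw [Finset.mem_range] at hn
    simp only [List.length_nil] at this
    omega

end QPAux3

namespace QPAux4
open Quiv QPAux QPAux2 QPAux3

variable {V : Type} {Q : Quiv V}

lemma vanishLt_mono {x : Q.CPA} {n n' : ℕ} (h : VanishLt x n) (h' : n' ≤ n) :
    VanishLt x n' := fun p hp => h p (lt_of_lt_of_le hp h')

lemma vanishLt_add {x y : Q.CPA} {n : ℕ} (hx : VanishLt x n) (hy : VanishLt y n) :
    VanishLt (x + y) n := fun p hp => by
  rw [Pi.add_apply, hx p hp, hy p hp, add_zero]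

lemma vanishLt_sub {x y : Q.CPA} {n : ℕ} (hx : VanishLt x n) (hy : VanishLt y n) :
    VanishLt (x - y) n := fun p hp => by
  rw [Pi.sub_apply, hx p hp, hy p hp, sub_zero]

lemma pδ_vanish (m : List Q.A) : VanishLt (pδ Q m) m.length := by
  intro p hp
  unfold pδ
  split
  · rw [Quiv.pathδ, if_neg]
    rintro rfl
    exact absurd rfl (Nat.ne_of_lt hp)
  · rfl

lemma arrowδ_vanish (c : Q.A) : VanishLt (Q.arrowδ c) 1 := by
  intro p hp
  rw [Quiv.arrowδ, if_neg]
  rintro rfl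
  exact absurd hp (by simp [Quiv.Pth.length])

noncomputable def listsLt (Q : Quiv V) [Fintype Q.A] (n : ℕ) : Finset (List Q.A) :=
  (Finset.range n).biUnion (fun k => (Finset.univ : Finset (Fin k → Q.A)).image List.ofFn)

lemma mem_listsLt [Fintype Q.A] {n : ℕ} {m : List Q.A} :
    m ∈ listsLt Q n ↔ m.length < n := by
  constructor
  · intro h
    rw [listsLt, Finset.mem_biUnion] at h
    obtain ⟨k, hk, hm⟩ := h
    rw [Finset.mem_image] at hm
    obtain ⟨g, -, rfl⟩ := hm
    rw [List.length_ofFn]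
    exact Finset.mem_range.mp hk
  · intro h
    rw [listsLt, Finset.mem_biUnion]
    exact ⟨m.length, Finset.mem_range.mpr h,
      Finset.mem_image.mpr ⟨m.get, Finset.mem_univ _, List.ofFn_get m⟩⟩

noncomputable def trunc (Q : Quiv V) [Fintype V] [Fintype Q.A] (n : ℕ) (x : Q.CPA) : Q.CPA :=
  (∑ i : V, x (Sum.inl i) • Q.pathδ (Sum.inl i)) + ∑ m ∈ listsLt Q n, atL x m • pδ Q m

lemma pathδ_inl_apply (i : V) (p : Q.Pth) :
    Q.pathδ (Sum.inl i) p = if p = Sum.inl i then 1 else 0 := rfl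

lemma trunc_apply [Fintype V] [Fintype Q.A] (n : ℕ) (hn : 0 < n) (x : Q.CPA) (p : Q.Pth) :
    trunc Q n x p = if p.length < n then x p else 0 := by
  rw [trunc, Pi.add_apply, Finset.sum_apply, Finset.sum_apply]
  cases p with
  | inl j =>
    have h2 : (∑ m ∈ listsLt Q n, (atL x m • pδ Q m) (Sum.inl j)) = 0 := by
      apply Finset.sum_eq_zero
      intro m _
      rw [Pi.smul_apply, pδ_inl, smul_zero]
    rw [h2, add_zero, Finset.sum_eq_single j]
    · rw [Pi.smul_apply, pathδ_inl_apply, if_pos rfl, smul_eq_mul, mul_one,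
        if_pos (by show (0:ℕ) < n; exact hn)]
    · intro i _ hij
      rw [Pi.smul_apply, pathδ_inl_apply, if_neg (by simp [Ne.symm hij]), smul_zero]
    · intro h; exact absurd (Finset.mem_univ j) h
  | inr l =>
    have h1 : (∑ i : V, (x (Sum.inl i) • Q.pathδ (Sum.inl i)) (Sum.inr l)) = 0 := by
      apply Finset.sum_eq_zero
      intro i _
      rw [Pi.smul_apply, pathδ_inl_apply, if_neg (by simp), smul_zero]
    rw [h1, zero_add]
    show _ = if l.1.length < n then x (Sum.inr l) else 0
    by_cases hl : l.1.length < n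
    · rw [if_pos hl, Finset.sum_eq_single l.1]
      · rw [Pi.smul_apply, pδ_inr, if_pos rfl, smul_eq_mul, mul_one, atL_eq]
      · intro m _ hm
        rw [Pi.smul_apply, pδ_inr, if_neg (fun h => hm h.symm), smul_zero]
      · intro h; exact absurd (mem_listsLt.mpr hl) h
    · rw [if_neg hl]
      apply Finset.sum_eq_zero
      intro m hm
      rw [Pi.smul_apply, pδ_inr, if_neg, smul_zero]
      rintro rfl
      exact hl (mem_listsLt.mp hm)

section F

variable {f : Q.CPA → Q.CPA} {ℓ : ℕ}

lemma f_zero (hfadd : ∀ x y : Q.CPA, f (x + y) = f x + f y) : f 0 = 0 := by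
  have h0 := hfadd 0 0
  rw [add_zero] at h0
  have h2 : f 0 + 0 = f 0 + f 0 := by rw [add_zero]; exact h0
  exact (add_left_cancel h2).symm

lemma f_sum (hfadd : ∀ x y : Q.CPA, f (x + y) = f x + f y) {ι : Type*} (s : Finset ι)
    (F : ι → Q.CPA) : f (∑ i ∈ s, F i) = ∑ i ∈ s, f (F i) := by
  classical
  induction s using Finset.induction with
  | empty => simpa using f_zero hfadd
  | @insert j s hj ih =>
    rw [Finset.sum_insert hj, Finset.sum_insert hj, hfadd, ih]

lemma pδ_single (c : Q.A) : pδ Q [c] = Q.arrowδ c := by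
  rw [pδ, dif_pos ⟨List.cons_ne_nil c [], List.isChain_singleton c⟩]
  rfl

lemma pδ_cons {c : Q.A} {r : List Q.A} (h : Valid Q (c :: r)) (hr : r ≠ []) :
    pδ Q (c :: r) = Q.conv (Q.arrowδ c) (pδ Q r) := by
  have hvr : Valid Q r := ⟨hr, h.2.tail⟩
  funext p
  cases p with
  | inl i =>
    rw [pδ_inl]
    show _ = Q.arrowδ c (Sum.inl i) * pδ Q r (Sum.inl i)
    rw [pδ_inl, mul_zero]
  | inr l =>
    rw [pδ_inr, conv_arrow_left, coefAt_pδ]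
    obtain ⟨L, hne, hch⟩ := l
    obtain ⟨hd, tl, rfl⟩ := List.exists_cons_of_ne_nil hne
    simp only [List.head_cons, List.tail_cons]
    by_cases h1 : hd = c
    · by_cases h2 : tl = r
      · subst h1; subst h2; simp [hvr]
      · simp [h1, h2]
    · simp [h1]

lemma fpδ_diff (hfmul : ∀ x y : Q.CPA, f (Q.conv x y) = Q.conv (f x) (f y))
    (habs : ∀ c : Q.A, ∃ d : Q.CPA, f (Q.arrowδ c) = Q.arrowδ c + d ∧ VanishLt d ℓ)
    (hl : 1 ≤ ℓ) :
    ∀ (m : List Q.A), Valid Q m → VanishLt (f (pδ Q m) - pδ Q m) (m.length + ℓ - 1) := by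
  intro m
  induction m with
  | nil => intro h; exact absurd rfl h.1
  | cons c r ih =>
    intro h
    by_cases hr : r = []
    · subst hr
      obtain ⟨d, hd, hdv⟩ := habs c
      rw [pδ_single, hd]
      have : Q.arrowδ c + d - Q.arrowδ c = d := by abel
      rw [this]
      exact vanishLt_mono hdv (by simp)
    · have hvr : Valid Q r := ⟨hr, h.2.tail⟩
      have ihr := ih hvr
      obtain ⟨d, hd, hdv⟩ := habs c
      rw [pδ_cons h hr, hfmul, hd]
      have hfr : f (pδ Q r) = pδ Q r + (f (pδ Q r) - pδ Q r) := by abel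
      rw [hfr, conv_add_left, conv_add_right, conv_add_right]
      have heq : Q.conv (Q.arrowδ c) (pδ Q r) +
            Q.conv (Q.arrowδ c) (f (pδ Q r) - pδ Q r) +
            (Q.conv d (pδ Q r) + Q.conv d (f (pδ Q r) - pδ Q r)) -
            Q.conv (Q.arrowδ c) (pδ Q r)
          = Q.conv (Q.arrowδ c) (f (pδ Q r) - pδ Q r) +
            (Q.conv d (pδ Q r) + Q.conv d (f (pδ Q r) - pδ Q r)) := by abel
      rw [heq]
      have hlen : (c :: r).length + ℓ - 1 = r.length + ℓ := by
        simp only [List.length_cons]; omega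
      rw [hlen]
      have hb1 : VanishLt (Q.conv (Q.arrowδ c) (f (pδ Q r) - pδ Q r)) (r.length + ℓ) := by
        have := conv_vanish (arrowδ_vanish c) ihr
        exact vanishLt_mono this (by omega)
      have hb2 : VanishLt (Q.conv d (pδ Q r)) (r.length + ℓ) := by
        have := conv_vanish hdv (pδ_vanish r)
        exact vanishLt_mono this (by omega)
      have hb3 : VanishLt (Q.conv d (f (pδ Q r) - pδ Q r)) (r.length + ℓ) := by
        have := conv_vanish hdv ihr
        exact vanishLt_mono this (by omega)
      exact vanishLt_add hb1 (vanishLt_add hb2 hb3)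

lemma f_eq_on_low [Fintype V] [Fintype Q.A]
    (hfadd : ∀ x y : Q.CPA, f (x + y) = f x + f y)
    (hfsmul : ∀ (c : ℂ) (x : Q.CPA), f (c • x) = c • f x)
    (hfmul : ∀ x y : Q.CPA, f (Q.conv x y) = Q.conv (f x) (f y))
    (hfidem : ∀ i : V, f (Q.idem i) = Q.idem i)
    (hfcont : ∀ n : ℕ, ∃ m : ℕ, ∀ x y : Q.CPA,
      (∀ p : Q.Pth, p.length < m → x p = y p) →
      ∀ p : Q.Pth, p.length < n → f x p = f y p)
    (habs : ∀ c : Q.A, ∃ d : Q.CPA, f (Q.arrowδ c) = Q.arrowδ c + d ∧ VanishLt d ℓ)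
    (hl : 1 ≤ ℓ)
    {x : Q.CPA} {m : ℕ} (hm : 1 ≤ m) (hx : VanishLt x m) :
    ∀ p : Q.Pth, p.length < m + ℓ - 1 → f x p = x p := by
  intro p hp
  obtain ⟨m₀, hm₀⟩ := hfcont (p.length + 1)
  set n' := max m₀ (p.length + 1) with hn'
  have hn'pos : 0 < n' := by omega
  have hagree : ∀ q : Q.Pth, q.length < m₀ → x q = trunc Q n' x q := by
    intro q hq
    rw [trunc_apply n' hn'pos, if_pos (by omega)]
  have h1 : f x p = f (trunc Q n' x) p :=
    hm₀ x (trunc Q n' x) hagree p (by omega)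
  have h2 : f (trunc Q n' x) p = trunc Q n' x p := by
    rw [trunc, hfadd, f_sum hfadd, f_sum hfadd, Pi.add_apply, Pi.add_apply,
      Finset.sum_apply, Finset.sum_apply, Finset.sum_apply, Finset.sum_apply]
    congr 1
    · apply Finset.sum_congr rfl
      intro i _
      rw [hfsmul]
      show x (Sum.inl i) • f (Q.idem i) p = _
      rw [hfidem]
      rfl
    · apply Finset.sum_congr rfl
      intro q _
      rw [hfsmul, Pi.smul_apply, Pi.smul_apply]
      by_cases hq : atL x q = 0
      · rw [hq, zero_smul, zero_smul]
      · congr 1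
        have hvq : Valid Q q := by
          by_contra hv
          exact hq (by rw [atL, dif_neg hv])
        have hqlen : m ≤ q.length := by
          by_contra hlen
          push_neg at hlen
          exact hq (by rw [atL, dif_pos hvq]; exact hx (Sum.inr (toPP q hvq)) hlen)
        have := fpδ_diff hfmul habs hl q hvq p (by omega)
        rw [Pi.sub_apply] at this
        exact sub_eq_zero.mp this
  rw [h1, h2, trunc_apply n' hn'pos, if_pos (by omega)]

lemma f_vanish [Fintype V] [Fintype Q.A]
    (hfadd : ∀ x y : Q.CPA, f (x + y) = f x + f y)
    (hfsmul : ∀ (c : ℂ) (x : Q.CPA), f (c • x) = c • f x)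
    (hfmul : ∀ x y : Q.CPA, f (Q.conv x y) = Q.conv (f x) (f y))
    (hfidem : ∀ i : V, f (Q.idem i) = Q.idem i)
    (hfcont : ∀ n : ℕ, ∃ m : ℕ, ∀ x y : Q.CPA,
      (∀ p : Q.Pth, p.length < m → x p = y p) →
      ∀ p : Q.Pth, p.length < n → f x p = f y p)
    (habs : ∀ c : Q.A, ∃ d : Q.CPA, f (Q.arrowδ c) = Q.arrowδ c + d ∧ VanishLt d ℓ)
    (hl : 1 ≤ ℓ)
    {x : Q.CPA} {m : ℕ} (hm : 1 ≤ m) (hx : VanishLt x m) : VanishLt (f x) m := by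
  intro p hp
  rw [f_eq_on_low hfadd hfsmul hfmul hfidem hfcont habs hl hm hx p (by omega)]
  exact hx p hp

end F
end QPAux4

namespace QPAux5
open Quiv QPAux QPAux2 QPAux3 QPAux4

variable {V : Type} {Q : Quiv V}

lemma isCyc_rotate_one {l : List Q.A} (h : IsCyc Q l) : IsCyc Q (l.rotate 1) := by
  obtain ⟨hne, hch, hcyc⟩ := h
  obtain ⟨x, xs, rfl⟩ := List.exists_cons_of_ne_nil hne
  by_cases hxs : xs = []
  · subst hxs
    have : ([x] : List Q.A).rotate 1 = [x] := by
      rw [← List.rotate_mod]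
      simp
    rw [this]
    exact ⟨hne, hch, hcyc⟩
  · have hrot : (x :: xs).rotate 1 = xs ++ [x] := by
      rw [List.rotate_cons_succ, List.rotate_zero]
    rw [hrot]
    have hch' := List.isChain_cons.mp hch
    have hhead : xs.head? = some (xs.head hxs) := List.head?_eq_head hxs
    have hcomp : Q.Comp x (xs.head hxs) := hch'.1 _ hhead
    have hne2 : xs ++ [x] ≠ [] := by simp
    refine ⟨hne2, ?_, ?_⟩
    · refine List.isChain_append.mpr ?_
      refine ⟨hch'.2, List.isChain_singleton x, ?_⟩
      intro p hp q hq
      simp only [List.head?_cons, Option.mem_def, Option.some.injEq] at hq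
      rw [List.getLast?_eq_getLast hxs, Option.mem_def, Option.some.injEq] at hp
      subst hp; subst hq
      have hgl : (x :: xs).getLast (by simp) = xs.getLast hxs := List.getLast_cons hxs
      rw [← hgl]
      rw [List.getLast_cons hxs] at hcyc
      rw [List.getLast_cons hxs]
      have hhd : (x :: xs).head (by simp) = x := rfl
      rw [hhd] at hcyc
      exact hcyc
    · have h1 : (xs ++ [x]).getLast hne2 = x := by simp [List.getLast_append]
      have h2 : (xs ++ [x]).head hne2 = xs.head hxs := List.head_append_of_ne_nil hxs
      rw [h1, h2]
      exact hcomp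

lemma isCyc_rotate {l : List Q.A} (h : IsCyc Q l) (j : ℕ) : IsCyc Q (l.rotate j) := by
  induction j with
  | zero => rw [List.rotate_zero]; exact h
  | succ n ih =>
    have : l.rotate (n + 1) = (l.rotate n).rotate 1 := by rw [List.rotate_rotate]
    rw [this]
    exact isCyc_rotate_one ih

/-- The (finite) set of rotations of a list. -/
noncomputable def orbitF (l : List Q.A) : Finset (List Q.A) :=
  (Finset.range l.length).image (fun i => l.rotate i)

lemma mem_orbitF {m l : List Q.A} : m ∈ orbitF l ↔ ∃ i < l.length, l.rotate i = m := by
  simp [orbitF]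

lemma self_mem_orbitF {l : List Q.A} (h : l ≠ []) : l ∈ orbitF l :=
  mem_orbitF.mpr ⟨0, List.length_pos_iff.mpr h, List.rotate_zero l⟩

lemma length_of_mem_orbitF {m l : List Q.A} (h : m ∈ orbitF l) : m.length = l.length := by
  obtain ⟨i, -, rfl⟩ := mem_orbitF.mp h
  exact List.length_rotate l i

lemma rotate_mem_orbitF {l : List Q.A} (h : l ≠ []) (j : ℕ) : l.rotate j ∈ orbitF l := by
  rw [← List.rotate_mod]
  exact mem_orbitF.mpr ⟨j % l.length, Nat.mod_lt _ (List.length_pos_iff.mpr h), rfl⟩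

lemma orbitF_rotate (l : List Q.A) (j : ℕ) : orbitF (l.rotate j) = orbitF l := by
  by_cases hl : l = []
  · subst hl; rw [List.rotate_nil]
  · have hlen : 0 < l.length := List.length_pos_iff.mpr hl
    have hsub : ∀ (l' : List Q.A) (j' : ℕ), orbitF (l'.rotate j') ⊆ orbitF l' := by
      intro l' j' m hm
      obtain ⟨i, hi, rfl⟩ := mem_orbitF.mp hm
      rw [List.rotate_rotate]
      by_cases hl' : l' = []
      · subst hl'; simp [List.rotate_nil] at *
      · exact rotate_mem_orbitF hl' _
    apply Finset.Subset.antisymm (hsub l j)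
    have hdm : l.length * (j / l.length) + j % l.length = j := Nat.div_add_mod j l.length
    have hmod : j % l.length < l.length := Nat.mod_lt _ hlen
    have harith : j + (l.length - j % l.length) = l.length * (j / l.length) + l.length := by omega
    have hrot : (l.rotate j).rotate (l.length - j % l.length) = l := by
      rw [List.rotate_rotate, harith, ← List.rotate_rotate, List.rotate_length_mul,
        List.rotate_length]
    intro m hm
    have : orbitF l = orbitF ((l.rotate j).rotate (l.length - j % l.length)) := by rw [hrot]
    rw [this] at hm
    exact hsub _ _ hm

lemma mem_orbitF_symm {m l : List Q.A} (h : m ∈ orbitF l) : l ∈ orbitF m := by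
  obtain ⟨i, hi, rfl⟩ := mem_orbitF.mp h
  rw [orbitF_rotate]
  exact self_mem_orbitF (by intro h0; subst h0; simp at hi)

lemma orbitF_eq_of_mem {m l : List Q.A} (h : m ∈ orbitF l) : orbitF m = orbitF l := by
  obtain ⟨i, hi, rfl⟩ := mem_orbitF.mp h
  exact orbitF_rotate l i

lemma isCyc_of_mem_orbitF {m l : List Q.A} (h : m ∈ orbitF l) (hc : IsCyc Q l) :
    IsCyc Q m := by
  obtain ⟨i, hi, rfl⟩ := mem_orbitF.mp h
  exact isCyc_rotate hc i

lemma valid_of_isCyc {l : List Q.A} (h : IsCyc Q l) : Valid Q l := ⟨h.choose, h.choose_spec.1⟩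

lemma mem_of_mem_orbitF {x : Q.A} {m l : List Q.A} (h : m ∈ orbitF l) (hx : x ∈ l) : x ∈ m := by
  obtain ⟨i, hi, rfl⟩ := mem_orbitF.mp h
  rw [List.mem_rotate]
  exact hx

lemma head_rotate {l : List Q.A} {i : ℕ} (hi : i < l.length) (h : l.rotate i ≠ []) :
    (l.rotate i).head h = l.get ⟨i, hi⟩ := by
  rw [List.head_eq_getElem, List.getElem_rotate]
  simp [Nat.mod_eq_of_lt hi]

lemma exists_rotation_head {x : Q.A} {l : List Q.A} (hx : x ∈ l) :
    ∃ m ∈ orbitF l, ∃ h : m ≠ [], m.head h = x := by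
  obtain ⟨⟨i, hi⟩, hget⟩ := List.mem_iff_get.mp hx
  have hne : l.rotate i ≠ [] := by
    intro h0
    have := List.length_rotate l i
    rw [h0] at this
    simp at this
    omega
  exact ⟨l.rotate i, mem_orbitF.mpr ⟨i, hi, rfl⟩, hne, by rw [head_rotate hi]; exact hget⟩

section Rho

variable (Q) (PA PB : Q.A → Prop)

noncomputable def filterA (l : List Q.A) : Finset (List Q.A) :=
  (orbitF l).filter (fun m => ∃ h : m ≠ [], PA (m.head h))

noncomputable def filterB (l : List Q.A) : Finset (List Q.A) :=
  (orbitF l).filter (fun m => ∃ h : m ≠ [], PB (m.head h))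

variable {Q} in
noncomputable def pick (s : Finset (List Q.A)) : List Q.A :=
  if h : s.Nonempty then h.choose else []

variable {Q} in
lemma pick_mem {s : Finset (List Q.A)} (h : s.Nonempty) : pick s ∈ s := by
  rw [pick, dif_pos h]
  exact h.choose_spec

noncomputable def rho (l : List Q.A) : List Q.A :=
  if IsCyc Q l ∧ ∃ x ∈ l, PA x ∨ PB x then
    (if (filterA Q PA l).Nonempty then pick (filterA Q PA l) else pick (filterB Q PB l))
  else l

variable {Q PA PB}

lemma rho_eq_self_of_not {l : List Q.A} (h : ¬(IsCyc Q l ∧ ∃ x ∈ l, PA x ∨ PB x)) :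
    rho Q PA PB l = l := if_neg h

lemma filterA_nonempty {l : List Q.A} {x : Q.A} (hx : x ∈ l) (hPA : PA x) :
    (filterA Q PA l).Nonempty := by
  obtain ⟨m, hm, hne, hh⟩ := exists_rotation_head hx
  exact ⟨m, Finset.mem_filter.mpr ⟨hm, hne, by rw [hh]; exact hPA⟩⟩

lemma filterB_nonempty {l : List Q.A} {x : Q.A} (hx : x ∈ l) (hPB : PB x) :
    (filterB Q PB l).Nonempty := by
  obtain ⟨m, hm, hne, hh⟩ := exists_rotation_head hx
  exact ⟨m, Finset.mem_filter.mpr ⟨hm, hne, by rw [hh]; exact hPB⟩⟩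

lemma rho_spec {l : List Q.A} (hc : IsCyc Q l ∧ ∃ x ∈ l, PA x ∨ PB x) :
    rho Q PA PB l ∈ orbitF l ∧
      ∃ h : rho Q PA PB l ≠ [], PA ((rho Q PA PB l).head h) ∨ PB ((rho Q PA PB l).head h) := by
  rw [rho, if_pos hc]
  by_cases ha : (filterA Q PA l).Nonempty
  · rw [if_pos ha]
    have := pick_mem ha
    rw [filterA, Finset.mem_filter] at this
    obtain ⟨hm, hne, hh⟩ := this
    exact ⟨hm, hne, Or.inl hh⟩
  · rw [if_neg ha]
    have hb : (filterB Q PB l).Nonempty := by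
      obtain ⟨x, hx, hP⟩ := hc.2
      rcases hP with hP | hP
      · exact absurd (filterA_nonempty hx hP) ha
      · exact filterB_nonempty hx hP
    have := pick_mem hb
    rw [filterB, Finset.mem_filter] at this
    obtain ⟨hm, hne, hh⟩ := this
    exact ⟨hm, hne, Or.inr hh⟩

lemma rho_mem_filterA {l : List Q.A} (hc : IsCyc Q l ∧ ∃ x ∈ l, PA x ∨ PB x)
    (ha : (filterA Q PA l).Nonempty) : rho Q PA PB l ∈ filterA Q PA l := by
  rw [rho, if_pos hc, if_pos ha]
  exact pick_mem ha

lemma filterA_rotate (l : List Q.A) (j : ℕ) :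
    filterA Q PA (l.rotate j) = filterA Q PA l := by
  rw [filterA, filterA, orbitF_rotate]

lemma filterB_rotate (l : List Q.A) (j : ℕ) :
    filterB Q PB (l.rotate j) = filterB Q PB l := by
  rw [filterB, filterB, orbitF_rotate]

lemma rho_rotate {l : List Q.A} (hc : IsCyc Q l ∧ ∃ x ∈ l, PA x ∨ PB x) (j : ℕ) :
    rho Q PA PB (l.rotate j) = rho Q PA PB l := by
  have hc' : IsCyc Q (l.rotate j) ∧ ∃ x ∈ l.rotate j, PA x ∨ PB x := by
    refine ⟨isCyc_rotate hc.1 j, ?_⟩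
    obtain ⟨x, hx, hP⟩ := hc.2
    exact ⟨x, List.mem_rotate.mpr hx, hP⟩
  rw [rho, rho, if_pos hc, if_pos hc', filterA_rotate, filterB_rotate]

lemma rho_eq_rho_of_mem_orbitF {m l : List Q.A} (hm : m ∈ orbitF l)
    (hc : IsCyc Q l ∧ ∃ x ∈ l, PA x ∨ PB x) :
    rho Q PA PB m = rho Q PA PB l := by
  obtain ⟨i, hi, rfl⟩ := mem_orbitF.mp hm
  exact rho_rotate hc i

lemma rho_mem_orbitF {l : List Q.A} : rho Q PA PB l ∈ orbitF l ∨ rho Q PA PB l = l := by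
  by_cases hc : IsCyc Q l ∧ ∃ x ∈ l, PA x ∨ PB x
  · exact Or.inl (rho_spec hc).1
  · exact Or.inr (rho_eq_self_of_not hc)

end Rho
end QPAux5

namespace QPAux6
open Quiv QPAux QPAux2 QPAux3 QPAux4 QPAux5

variable {V : Type} {Q : Quiv V}

lemma isCycle_inr_iff (l : Q.PathsPos) : Q.IsCycle (Sum.inr l) ↔ IsCyc Q l.1 := by
  constructor
  · rintro ⟨-, hst⟩
    exact ⟨l.2.1, l.2.2, hst⟩
  · rintro ⟨h, -, hst⟩
    refine ⟨List.length_pos_iff.mpr h, hst⟩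

lemma vanishLt_finsetSum {ι : Type*} {s : Finset ι} {F : ι → Q.CPA} {n : ℕ}
    (h : ∀ i ∈ s, VanishLt (F i) n) : VanishLt (∑ i ∈ s, F i) n := by
  intro p hp
  rw [Finset.sum_apply]
  exact Finset.sum_eq_zero fun i hi => h i hi p hp

lemma atL_vanish {x : Q.CPA} {n : ℕ} (hx : VanishLt x n) {m : List Q.A}
    (hm : m.length < n) : atL x m = 0 := by
  rw [atL]
  split
  · exact hx _ hm
  · rfl

lemma span_rot {l : List Q.A} (hc : IsCyc Q l) (j : ℕ) :
    pδ Q l - pδ Q (l.rotate j) ∈ (Submodule.span ℂ Q.rotDiffs : Submodule ℂ Q.CPA) := by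
  induction j with
  | zero => rw [List.rotate_zero, sub_self]; exact Submodule.zero_mem _
  | succ n ih =>
    have hcn : IsCyc Q (l.rotate n) := isCyc_rotate hc n
    have hcn1 : IsCyc Q (l.rotate (n + 1)) := isCyc_rotate hc (n + 1)
    have hvn : Valid Q (l.rotate n) := valid_of_isCyc hcn
    have hvn1 : Valid Q (l.rotate (n + 1)) := valid_of_isCyc hcn1
    have hsplit : pδ Q l - pδ Q (l.rotate (n + 1)) =
        (pδ Q l - pδ Q (l.rotate n)) + (pδ Q (l.rotate n) - pδ Q (l.rotate (n + 1))) := by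
      abel
    rw [hsplit]
    apply Submodule.add_mem _ ih
    apply Submodule.subset_span
    refine ⟨toPP _ hvn, toPP _ hvn1, ?_, ?_, ?_⟩
    · exact (isCycle_inr_iff _).mpr hcn
    · show l.rotate (n + 1) = (l.rotate n).rotate 1
      rw [List.rotate_rotate]
    · rw [pδ, dif_pos hvn, pδ, dif_pos hvn1]

lemma atL_sum {ι : Type*} (s : Finset ι) (F : ι → Q.CPA) (m : List Q.A) :
    atL (∑ i ∈ s, F i) m = ∑ i ∈ s, atL (F i) m := by
  rw [atL]
  split
  · rw [Finset.sum_apply]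
    exact Finset.sum_congr rfl fun i _ => by rw [atL, dif_pos ‹_›]
  · exact (Finset.sum_eq_zero fun i _ => by rw [atL, dif_neg ‹_›]).symm

lemma atL_pδ {r m : List Q.A} (hr : Valid Q r) : atL (pδ Q r) m = if m = r then 1 else 0 := by
  rw [atL]
  split
  · rw [pδ_inr]
    rfl
  · rw [if_neg (by rintro rfl; exact ‹¬Valid Q m› hr)]

lemma valid_pair {c d : Q.A} (h : Q.Comp c d) : Valid Q [c, d] :=
  ⟨by simp, List.isChain_pair.mpr h⟩

lemma isCyc_pair {c d : Q.A} (h1 : Q.Comp c d) (h2 : Q.src d = Q.tgt c) : IsCyc Q [c, d] :=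
  ⟨by simp, List.isChain_pair.mpr h1, by simp [h2]⟩

lemma orbitF_pair (c d : Q.A) : orbitF ([c, d] : List Q.A) = {[c, d], [d, c]} := by
  apply Finset.ext
  intro m
  rw [mem_orbitF]
  constructor
  · rintro ⟨i, hi, rfl⟩
    simp only [List.length_cons, List.length_nil] at hi
    interval_cases i
    · simp [List.rotate_zero]
    · have : ([c, d] : List Q.A).rotate 1 = [d, c] := by
        rw [List.rotate_cons_succ, List.rotate_zero]
        rfl
      simp [this]
  · intro hm
    simp only [Finset.mem_insert, Finset.mem_singleton] at hm
    rcases hm with rfl | rfl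
    · exact ⟨0, by simp, List.rotate_zero _⟩
    · refine ⟨1, by simp, ?_⟩
      rw [List.rotate_cons_succ, List.rotate_zero]
      rfl

lemma atL_add (x y : Q.CPA) (m : List Q.A) : atL (x + y) m = atL x m + atL y m := by
  rw [atL, atL, atL]
  split
  · rfl
  · rw [add_zero]

lemma atL_sub (x y : Q.CPA) (m : List Q.A) : atL (x - y) m = atL x m - atL y m := by
  rw [atL, atL, atL]
  split
  · rfl
  · rw [sub_zero]

lemma head_congr {α : Type*} {l1 l2 : List α} (h : l1 = l2) (h1 : l1 ≠ []) (h2 : l2 ≠ []) :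
    l1.head h1 = l2.head h2 := by subst h; rfl

end QPAux6

open QPAux QPAux2 QPAux3 QPAux4 QPAux5 QPAux6

open Quiv in
/-- One step of the Derksen–Weyman–Zelevinsky reduction process.  Let `(Q,W)` be a QP
whose potential has the normal form
`W = ∑_{k=1}^N a_k b_k + ∑_{k=1}^N (a_k u_k + b_k v_k) + W'`,
where `a₁,b₁,…,a_N,b_N` are `2N` distinct arrows such that each `a_k b_k` is a
2-cycle, `u_k, v_k ∈ 𝔪^ℓ` for some `ℓ ≥ 2`, and `W' ∈ 𝔪³` involves none of the arrows
`a_k, b_k`.  Let `f` be the (continuous, unital, `e_i`-fixing) algebra endomorphism of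
`ℂ⟨⟨Q⟩⟩` with `f(a_k) = a_k − v_k`, `f(b_k) = b_k − u_k` and `f(c) = c` for all other
arrows `c`.  Then `f(W)` is cyclically equivalent to a potential of the same form, but
with the correction terms `u'_k, v'_k` lying in `𝔪^{ℓ'}` for some `ℓ' > ℓ`. -/
theorem stmt11 (V : Type) [Fintype V] [DecidableEq V] (Q : Quiv V) [Fintype Q.A]
    (N : ℕ) (a b : Fin N → Q.A)
    (hdistinct : Function.Injective (Sum.elim a b : Fin N ⊕ Fin N → Q.A))
    (h2cycle : ∀ k, Q.src (a k) = Q.tgt (b k) ∧ Q.src (b k) = Q.tgt (a k))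
    (ℓ : ℕ) (hℓ : 2 ≤ ℓ) (u v : Fin N → Q.CPA)
    (hu : ∀ k, ∀ p : Q.Pth, p.length < ℓ → u k p = 0)
    (hv : ∀ k, ∀ p : Q.Pth, p.length < ℓ → v k p = 0)
    (W' : Q.CPA)
    (hW'm3 : ∀ p : Q.Pth, p.length < 3 → W' p = 0)
    (hW'avoid : ∀ (l : Q.PathsPos) (k : Fin N),
      a k ∈ l.1 ∨ b k ∈ l.1 → W' (Sum.inr l) = 0)
    (W : Q.CPA) (hWpot : Q.IsPotential W)
    (hW : W = (∑ k, Q.conv (Q.arrowδ (a k)) (Q.arrowδ (b k)))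
        + (∑ k, (Q.conv (Q.arrowδ (a k)) (u k) + Q.conv (Q.arrowδ (b k)) (v k)))
        + W')
    (f : Q.CPA → Q.CPA)
    (hfadd : ∀ x y : Q.CPA, f (x + y) = f x + f y)
    (hfsmul : ∀ (c : ℂ) (x : Q.CPA), f (c • x) = c • f x)
    (hfmul : ∀ x y : Q.CPA, f (Q.conv x y) = Q.conv (f x) (f y))
    (hfone : f Q.one = Q.one)
    (hfidem : ∀ i : V, f (Q.idem i) = Q.idem i)
    (hfcont : ∀ n : ℕ, ∃ m : ℕ, ∀ x y : Q.CPA,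
      (∀ p : Q.Pth, p.length < m → x p = y p) →
      ∀ p : Q.Pth, p.length < n → f x p = f y p)
    (hfa : ∀ k, f (Q.arrowδ (a k)) = Q.arrowδ (a k) - v k)
    (hfb : ∀ k, f (Q.arrowδ (b k)) = Q.arrowδ (b k) - u k)
    (hfc : ∀ c : Q.A, (∀ k, c ≠ a k ∧ c ≠ b k) → f (Q.arrowδ c) = Q.arrowδ c) :
    ∃ ℓ' : ℕ, ℓ < ℓ' ∧ ∃ (u' v' : Fin N → Q.CPA) (W'' : Q.CPA),
      (∀ k, ∀ p : Q.Pth, p.length < ℓ' → u' k p = 0) ∧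
      (∀ k, ∀ p : Q.Pth, p.length < ℓ' → v' k p = 0) ∧
      (∀ p : Q.Pth, p.length < 3 → W'' p = 0) ∧
      (∀ (l : Q.PathsPos) (k : Fin N),
        a k ∈ l.1 ∨ b k ∈ l.1 → W'' (Sum.inr l) = 0) ∧
      Q.CycEquiv (f W)
        ((∑ k, Q.conv (Q.arrowδ (a k)) (Q.arrowδ (b k)))
          + (∑ k, (Q.conv (Q.arrowδ (a k)) (u' k) + Q.conv (Q.arrowδ (b k)) (v' k)))
          + W'') := by
  classical
  set PA : Q.A → Prop := fun c => ∃ k : Fin N, c = a k with hPAdef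
  set PB : Q.A → Prop := fun c => ∃ k : Fin N, c = b k with hPBdef
  set g : Q.CPA := f W with hgdef
  set S₂ : Q.CPA := (∑ k, Q.conv (Q.arrowδ (a k)) (Q.arrowδ (b k))) with hS2def
  -- injectivity consequences
  have haa : ∀ k j : Fin N, a k = a j → k = j := by
    intro k j h
    have := hdistinct (a₁ := Sum.inl k) (a₂ := Sum.inl j) h
    exact Sum.inl.inj this
  have hbb : ∀ k j : Fin N, b k = b j → k = j := by
    intro k j h
    have := hdistinct (a₁ := Sum.inr k) (a₂ := Sum.inr j) h
    exact Sum.inr.inj this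
  have hab : ∀ k j : Fin N, a k ≠ b j := by
    intro k j h
    have := hdistinct (a₁ := Sum.inl k) (a₂ := Sum.inr j) h
    simp at this
  have hl1 : 1 ≤ ℓ := by omega
  have habs : ∀ c : Q.A, ∃ d : Q.CPA, f (Q.arrowδ c) = Q.arrowδ c + d ∧ VanishLt d ℓ := by
    intro c
    by_cases hA : ∃ k, c = a k
    · obtain ⟨k, rfl⟩ := hA
      exact ⟨-(v k), by rw [hfa k]; abel, fun p hp => by
        rw [Pi.neg_apply, hv k p hp, neg_zero]⟩
    · by_cases hB : ∃ k, c = b k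
      · obtain ⟨k, rfl⟩ := hB
        exact ⟨-(u k), by rw [hfb k]; abel, fun p hp => by
          rw [Pi.neg_apply, hu k p hp, neg_zero]⟩
      · push_neg at hA hB
        exact ⟨0, by rw [hfc c (fun k => ⟨hA k, hB k⟩), add_zero], fun p hp => rfl⟩
  -- basic structure of S₂
  have hCab : ∀ k, Q.Comp (a k) (b k) := fun k => (h2cycle k).1
  have hvab : ∀ k, Valid Q [a k, b k] := fun k => valid_pair (hCab k)
  have hcycab : ∀ k, IsCyc Q [a k, b k] := fun k => isCyc_pair (hCab k) (h2cycle k).2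
  have hS2eq : S₂ = ∑ k, pδ Q [a k, b k] := by
    rw [hS2def]
    refine Finset.sum_congr rfl fun k _ => ?_
    rw [pδ_cons (hvab k) (by simp), pδ_single]
  have hS2at : ∀ m : List Q.A, atL S₂ m = ∑ k, (if m = [a k, b k] then (1:ℂ) else 0) := by
    intro m
    rw [hS2eq, atL_sum]
    exact Finset.sum_congr rfl fun k _ => atL_pδ (hvab k)
  have hS2inr : ∀ l : Q.PathsPos,
      S₂ (Sum.inr l) = ∑ k, (if l.1 = [a k, b k] then (1:ℂ) else 0) := by
    intro l
    rw [← atL_eq S₂ l, hS2at]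
  have hS2v : VanishLt S₂ 2 := by
    rw [hS2def]
    exact vanishLt_finsetSum fun k _ => conv_vanish (arrowδ_vanish _) (arrowδ_vanish _)
  have hS2noncyc : ∀ l : Q.PathsPos, ¬ IsCyc Q l.1 → S₂ (Sum.inr l) = 0 := by
    intro l hnc
    rw [hS2inr]
    refine Finset.sum_eq_zero fun k _ => ?_
    rw [if_neg]
    intro h
    exact hnc (by rw [h]; exact hcycab k)
  have hS2headspec : ∀ l : Q.PathsPos, ¬ PA (l.1.head l.2.1) → S₂ (Sum.inr l) = 0 := by
    intro l hna
    rw [hS2inr]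
    refine Finset.sum_eq_zero fun k _ => ?_
    rw [if_neg]
    intro h
    apply hna
    have h1 : l.1.head? = some (l.1.head l.2.1) := List.head?_eq_head l.2.1
    have h2 : l.1.head? = some (a k) := by rw [h]; rfl
    have h3 := Option.some.inj (h1.symm.trans h2)
    exact ⟨k, h3⟩
  -- W and g vanish below length 2
  have hWv : VanishLt W 2 := by
    rw [hW]
    refine vanishLt_add (vanishLt_add hS2v ?_) (vanishLt_mono hW'm3 (by omega))
    refine vanishLt_finsetSum fun k _ => vanishLt_add ?_ ?_
    · exact vanishLt_mono (conv_vanish (arrowδ_vanish _) (hu k)) (by omega)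
    · exact vanishLt_mono (conv_vanish (arrowδ_vanish _) (hv k)) (by omega)
  have hgv : VanishLt g 2 :=
    f_vanish hfadd hfsmul hfmul hfidem hfcont habs hl1 (by omega) hWv
  -- the decomposition g = S₂ + D + W' + Z
  set D : Q.CPA :=
    ∑ k, (Q.conv (Q.arrowδ (b k)) (v k) - Q.conv (v k) (Q.arrowδ (b k))) with hDdef
  set Z : Q.CPA := ((∑ k, Q.conv (Q.arrowδ (a k)) (f (u k) - u k))
      + (∑ k, Q.conv (Q.arrowδ (b k)) (f (v k) - v k))
      + (∑ k, (Q.conv (v k) (u k) - Q.conv (v k) (f (u k)) - Q.conv (u k) (f (v k))))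
      + (f W' - W')) with hZdef
  have hZv : VanishLt Z (ℓ + 2) := by
    have hdiffu : ∀ k, VanishLt (f (u k) - u k) (ℓ + ℓ - 1) := by
      intro k p hp
      rw [Pi.sub_apply,
        f_eq_on_low hfadd hfsmul hfmul hfidem hfcont habs hl1 hl1 (hu k) p hp, sub_self]
    have hdiffv : ∀ k, VanishLt (f (v k) - v k) (ℓ + ℓ - 1) := by
      intro k p hp
      rw [Pi.sub_apply,
        f_eq_on_low hfadd hfsmul hfmul hfidem hfcont habs hl1 hl1 (hv k) p hp, sub_self]
    rw [hZdef]
    refine vanishLt_add (vanishLt_add (vanishLt_add ?_ ?_) ?_) ?_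
    · refine vanishLt_finsetSum fun k _ => ?_
      exact vanishLt_mono (conv_vanish (arrowδ_vanish _) (hdiffu k)) (by omega)
    · refine vanishLt_finsetSum fun k _ => ?_
      exact vanishLt_mono (conv_vanish (arrowδ_vanish _) (hdiffv k)) (by omega)
    · refine vanishLt_finsetSum fun k _ => ?_
      refine vanishLt_sub (vanishLt_sub ?_ ?_) ?_
      · exact vanishLt_mono (conv_vanish (hv k) (hu k)) (by omega)
      · exact vanishLt_mono (conv_vanish (hv k)
          (f_vanish hfadd hfsmul hfmul hfidem hfcont habs hl1 hl1 (hu k))) (by omega)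
      · exact vanishLt_mono (conv_vanish (hu k)
          (f_vanish hfadd hfsmul hfmul hfidem hfcont habs hl1 hl1 (hv k))) (by omega)
    · intro p hp
      rw [Pi.sub_apply,
        f_eq_on_low hfadd hfsmul hfmul hfidem hfcont habs hl1 (by omega) hW'm3 p
          (by omega), sub_self]
  have hdec : g = S₂ + D + W' + Z := by
    have h1 : f S₂ = ∑ k, ((Q.conv (Q.arrowδ (a k)) (Q.arrowδ (b k))
        - Q.conv (Q.arrowδ (a k)) (u k))
        - (Q.conv (v k) (Q.arrowδ (b k)) - Q.conv (v k) (u k))) := by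
      rw [hS2def, f_sum hfadd]
      refine Finset.sum_congr rfl fun k _ => ?_
      rw [hfmul, hfa k, hfb k, conv_sub_left, conv_sub_right, conv_sub_right]
    have h2 : f (∑ k, (Q.conv (Q.arrowδ (a k)) (u k) + Q.conv (Q.arrowδ (b k)) (v k)))
        = ∑ k, ((Q.conv (Q.arrowδ (a k)) (f (u k)) - Q.conv (v k) (f (u k)))
          + (Q.conv (Q.arrowδ (b k)) (f (v k)) - Q.conv (u k) (f (v k)))) := by
      rw [f_sum hfadd]
      refine Finset.sum_congr rfl fun k _ => ?_
      rw [hfadd, hfmul, hfmul, hfa k, hfb k, conv_sub_left, conv_sub_left]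
    have hperk : ∀ k : Fin N,
        (((Q.conv (Q.arrowδ (a k)) (Q.arrowδ (b k)) - Q.conv (Q.arrowδ (a k)) (u k))
          - (Q.conv (v k) (Q.arrowδ (b k)) - Q.conv (v k) (u k)))
        + ((Q.conv (Q.arrowδ (a k)) (f (u k)) - Q.conv (v k) (f (u k)))
          + (Q.conv (Q.arrowδ (b k)) (f (v k)) - Q.conv (u k) (f (v k)))))
        = Q.conv (Q.arrowδ (a k)) (Q.arrowδ (b k))
          + (Q.conv (Q.arrowδ (b k)) (v k) - Q.conv (v k) (Q.arrowδ (b k)))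
          + (Q.conv (Q.arrowδ (a k)) (f (u k) - u k)
            + Q.conv (Q.arrowδ (b k)) (f (v k) - v k)
            + (Q.conv (v k) (u k) - Q.conv (v k) (f (u k)) - Q.conv (u k) (f (v k)))) := by
      intro k
      rw [conv_sub_right, conv_sub_right]
      abel
    rw [hgdef, hW, hfadd, hfadd, h1, h2, ← Finset.sum_add_distrib,
      Finset.sum_congr rfl (fun k _ => hperk k), Finset.sum_add_distrib,
      Finset.sum_add_distrib, Finset.sum_add_distrib, Finset.sum_add_distrib,
      hDdef, hZdef, ← hS2def]
    abel
  -- g is supported on cycles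
  have hgcyc : ∀ l : Q.PathsPos, ¬ IsCyc Q l.1 → g (Sum.inr l) = 0 := by
    have hWid : W = ∑ i : V, Q.conv (Q.idem i) (Q.conv W (Q.idem i)) := by
      funext p
      cases p with
      | inl x =>
        rw [Finset.sum_apply, Finset.sum_eq_single x]
        · show W (Sum.inl x) = Q.idem x (Sum.inl x) * (Q.conv W (Q.idem x) (Sum.inl x))
          show W (Sum.inl x) = Q.idem x (Sum.inl x) * (W (Sum.inl x) * Q.idem x (Sum.inl x))
          rw [Quiv.idem, if_pos rfl]
          ring
        · intro i _ hix
          show Q.idem i (Sum.inl x) * (Q.conv W (Q.idem i) (Sum.inl x)) = 0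
          rw [Quiv.idem, if_neg (by simp [Ne.symm hix]), zero_mul]
        · intro h; exact absurd (Finset.mem_univ x) h
      | inr l =>
        rw [Finset.sum_apply, Finset.sum_eq_single (Q.tgt (l.1.head l.2.1))]
        · rw [conv_idem_left, if_pos rfl, conv_idem_right]
          by_cases hW0 : W (Sum.inr l) = 0
          · rw [hW0]; split <;> rfl
          · have h2 : Q.src (l.1.getLast l.2.1) = Q.tgt (l.1.head l.2.1) :=
              (hWpot.1 (Sum.inr l) hW0).2
            rw [if_pos h2]
        · intro i _ hix
          rw [conv_idem_left, if_neg (Ne.symm hix)]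
        · intro h; exact absurd (Finset.mem_univ _) h
      -- done
    have hgid : g = ∑ i : V, Q.conv (Q.idem i) (Q.conv g (Q.idem i)) := by
      calc g = f (∑ i : V, Q.conv (Q.idem i) (Q.conv W (Q.idem i))) := by
              rw [hgdef]; exact congrArg f hWid
        _ = ∑ i : V, f (Q.conv (Q.idem i) (Q.conv W (Q.idem i))) := f_sum hfadd _ _
        _ = ∑ i : V, Q.conv (Q.idem i) (Q.conv g (Q.idem i)) :=
              Finset.sum_congr rfl fun i _ => by rw [hfmul, hfmul, hfidem, ← hgdef]
    intro l hnc
    have h0 := congrFun hgid (Sum.inr l)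
    rw [Finset.sum_apply, Finset.sum_eq_single (Q.tgt (l.1.head l.2.1))] at h0
    · rw [conv_idem_left, if_pos rfl, conv_idem_right] at h0
      by_cases hc : Q.src (l.1.getLast l.2.1) = Q.tgt (l.1.head l.2.1)
      · exact absurd ⟨l.2.1, l.2.2, hc⟩ hnc
      · rwa [if_neg hc] at h0
    · intro i _ hix
      rw [conv_idem_left, if_neg (Ne.symm hix)]
    · intro h; exact absurd (Finset.mem_univ _) h
  -- the rotation-normalised potential
  set gt : Q.CPA := fun p => Sum.elim (fun x => g (Sum.inl x))
    (fun l : Q.PathsPos =>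
      ∑ m ∈ orbitF l.1, if rho Q PA PB m = l.1 then atL g m else 0) p with hgtdef
  have hgtinr : ∀ l : Q.PathsPos, gt (Sum.inr l)
      = ∑ m ∈ orbitF l.1, if rho Q PA PB m = l.1 then atL g m else 0 := fun l => rfl
  have hgtinl : ∀ x : V, gt (Sum.inl x) = 0 := by
    intro x
    show g (Sum.inl x) = 0
    exact hgv (Sum.inl x) (by show (0:ℕ) < 2; omega)
  have hgtfix : ∀ l : Q.PathsPos, (∀ m ∈ orbitF l.1, rho Q PA PB m = m) →
      gt (Sum.inr l) = g (Sum.inr l) := by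
    intro l hfix
    rw [hgtinr, Finset.sum_eq_single_of_mem l.1 (self_mem_orbitF l.2.1)]
    · rw [if_pos (hfix l.1 (self_mem_orbitF l.2.1)), atL_eq]
    · intro m hm hne
      rw [if_neg (by rw [hfix m hm]; exact hne)]
  have hgtnc : ∀ l : Q.PathsPos, ¬ IsCyc Q l.1 → gt (Sum.inr l) = g (Sum.inr l) := by
    intro l hnc
    refine hgtfix l fun m hm => rho_eq_self_of_not fun hc => ?_
    exact hnc (isCyc_of_mem_orbitF (mem_orbitF_symm hm) hc.1)
  have hgtnospec : ∀ l : Q.PathsPos, ¬(∃ x ∈ l.1, PA x ∨ PB x) →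
      gt (Sum.inr l) = g (Sum.inr l) := by
    intro l hns
    refine hgtfix l fun m hm => rho_eq_self_of_not fun hc => ?_
    obtain ⟨x, hx, hP⟩ := hc.2
    exact hns ⟨x, mem_of_mem_orbitF (mem_orbitF_symm hm) hx, hP⟩
  have hgtne : ∀ l : Q.PathsPos, (IsCyc Q l.1 ∧ ∃ x ∈ l.1, PA x ∨ PB x) →
      rho Q PA PB l.1 ≠ l.1 → gt (Sum.inr l) = 0 := by
    intro l hc hne
    rw [hgtinr]
    refine Finset.sum_eq_zero fun m hm => ?_
    rw [if_neg]
    rw [rho_eq_rho_of_mem_orbitF hm hc]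
    exact hne
  have hgteq : ∀ l : Q.PathsPos, (IsCyc Q l.1 ∧ ∃ x ∈ l.1, PA x ∨ PB x) →
      rho Q PA PB l.1 = l.1 → gt (Sum.inr l) = ∑ m ∈ orbitF l.1, atL g m := by
    intro l hc heq
    rw [hgtinr]
    refine Finset.sum_congr rfl fun m hm => ?_
    rw [if_pos (by rw [rho_eq_rho_of_mem_orbitF hm hc]; exact heq)]
  -- class sums
  have hclassD : ∀ q : List Q.A, IsCyc Q q → (∑ m ∈ orbitF q, atL D m) = 0 := by
    intro q hq
    have hqlen : 0 < q.length := List.length_pos_iff.mpr hq.choose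
    have hstep : ∀ k : Fin N, ∀ m ∈ orbitF q,
        atL (Q.conv (Q.arrowδ (b k)) (v k)) m
          = atL (Q.conv (v k) (Q.arrowδ (b k))) (m.rotate 1) := by
      intro k m hm
      have hmc : IsCyc Q m := isCyc_of_mem_orbitF hm hq
      obtain ⟨hne, hch, hcy⟩ := hmc
      obtain ⟨x, xs, rfl⟩ := List.exists_cons_of_ne_nil hne
      by_cases hxs : xs = []
      · subst hxs
        have hr : ([x] : List Q.A).rotate 1 = [x] := by rw [← List.rotate_mod]; simp
        rw [hr]
        have hv1 : Valid Q [x] := ⟨by simp, List.isChain_singleton x⟩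
        rw [atL, dif_pos hv1, atL, dif_pos hv1, conv_arrow_left, conv_arrow_right]
        have hz : ∀ (w : V), Q.coefAt (v k) w [] = 0 := by
          intro w
          rw [Quiv.coefAt, dif_pos rfl]
          exact hv k _ (by show (0:ℕ) < ℓ; omega)
        have htl : (toPP [x] hv1).1.tail = [] := rfl
        have hdl : (toPP [x] hv1).1.dropLast = [] := rfl
        rw [htl, hdl, hz, hz]
        split <;> split <;> rfl
      · have hrot : (x :: xs).rotate 1 = xs ++ [x] := by
          rw [List.rotate_cons_succ, List.rotate_zero]
        have hv1 : Valid Q (x :: xs) := ⟨hne, hch⟩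
        have hc2 : IsCyc Q ((x :: xs).rotate 1) := isCyc_rotate_one ⟨hne, hch, hcy⟩
        rw [hrot] at hc2
        have hv2 : Valid Q (xs ++ [x]) := valid_of_isCyc hc2
        rw [atL, dif_pos hv1, atL, hrot, dif_pos hv2, conv_arrow_left, conv_arrow_right]
        have hgl : ∀ (h : xs ++ [x] ≠ []), (xs ++ [x]).getLast h = x := fun h => by
          simp [List.getLast_append]
        have hhd : ∀ (h : xs ++ [x] ≠ []), (xs ++ [x]).head h = xs.head hxs := fun h =>
          List.head_append_of_ne_nil hxs
        have hdl : (xs ++ [x]).dropLast = xs := List.dropLast_concat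
        show (if (x :: xs).head _ = b k then
            Q.coefAt (v k) (Q.src ((x :: xs).getLast _)) (x :: xs).tail else 0) = _
        dsimp only [List.head_cons, List.tail_cons]
        show _ = (if (xs ++ [x]).getLast _ = b k then
            Q.coefAt (v k) (Q.tgt ((xs ++ [x]).head _)) (xs ++ [x]).dropLast else 0)
        simp only [List.head_cons, hgl, hhd, hdl, coefAt_of_ne _ _ _ hxs]
        exact if_congr (Iff.of_eq (congrArg (· = b k) (hgl _).symm)) rfl rfl
    have hD : ∀ m ∈ orbitF q, atL D m = ∑ k, (atL (Q.conv (Q.arrowδ (b k)) (v k)) m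
        - atL (Q.conv (v k) (Q.arrowδ (b k))) m) := by
      intro m _
      rw [hDdef, atL_sum]
      exact Finset.sum_congr rfl fun k _ => atL_sub _ _ _
    rw [Finset.sum_congr rfl hD, Finset.sum_comm]
    refine Finset.sum_eq_zero fun k _ => ?_
    rw [Finset.sum_sub_distrib, sub_eq_zero]
    refine Finset.sum_nbij' (fun m => m.rotate 1) (fun m => m.rotate (q.length - 1))
      ?_ ?_ ?_ ?_ ?_
    · intro m hm
      have hmne : m ≠ [] := by
        intro h0
        rw [← length_of_mem_orbitF hm, h0] at hqlen
        simp at hqlen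
      rw [← orbitF_eq_of_mem hm]
      exact rotate_mem_orbitF hmne 1
    · intro m hm
      have hmne : m ≠ [] := by
        intro h0
        rw [← length_of_mem_orbitF hm, h0] at hqlen
        simp at hqlen
      rw [← orbitF_eq_of_mem hm]
      exact rotate_mem_orbitF hmne _
    · intro m hm
      show (m.rotate 1).rotate (q.length - 1) = m
      rw [List.rotate_rotate]
      have h1 : 1 + (q.length - 1) = q.length := by omega
      rw [h1, ← length_of_mem_orbitF hm, List.rotate_length]
    · intro m hm
      show (m.rotate (q.length - 1)).rotate 1 = m
      rw [List.rotate_rotate]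
      have h1 : q.length - 1 + 1 = q.length := by omega
      rw [h1, ← length_of_mem_orbitF hm, List.rotate_length]
    · exact hstep k
  have hclassW' : ∀ q : List Q.A, (∃ x ∈ q, PA x ∨ PB x) →
      (∑ m ∈ orbitF q, atL W' m) = 0 := by
    intro q hsp
    refine Finset.sum_eq_zero fun m hm => ?_
    obtain ⟨x, hx, hP⟩ := hsp
    have hxm : x ∈ m := mem_of_mem_orbitF hm hx
    rw [atL]
    split
    · rcases hP with ⟨k, rfl⟩ | ⟨k, rfl⟩
      · exact hW'avoid _ k (Or.inl hxm)
      · exact hW'avoid _ k (Or.inr hxm)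
    · rfl
  have hclassZ : ∀ q : List Q.A, q.length < ℓ + 2 → (∑ m ∈ orbitF q, atL Z m) = 0 := by
    intro q hq
    refine Finset.sum_eq_zero fun m hm => ?_
    exact atL_vanish hZv (by rw [length_of_mem_orbitF hm]; exact hq)
  have hrhoab : ∀ k, rho Q PA PB [a k, b k] = [a k, b k] := by
    intro k
    have hcy := hcycab k
    have hsp : ∃ x ∈ [a k, b k], PA x ∨ PB x := ⟨a k, by simp, Or.inl ⟨k, rfl⟩⟩
    have hfA : filterA Q PA [a k, b k] = {[a k, b k]} := by
      apply Finset.ext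
      intro m
      simp only [filterA, Finset.mem_filter, orbitF_pair, Finset.mem_singleton]
      constructor
      · rintro ⟨hm, hne, hh⟩
        rcases Finset.mem_insert.mp hm with rfl | hm2
        · rfl
        · rw [Finset.mem_singleton] at hm2
          subst hm2
          obtain ⟨j, hj⟩ := hh
          exact absurd hj.symm (hab j k)
      · rintro rfl
        exact ⟨Finset.mem_insert_self _ _, by simp, ⟨k, rfl⟩⟩
    have hmem := rho_mem_filterA (PB := PB) ⟨hcy, hsp⟩
      (by rw [hfA]; exact ⟨_, Finset.mem_singleton_self _⟩)
    rw [hfA, Finset.mem_singleton] at hmem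
    exact hmem
  have hclassS2 : ∀ q : List Q.A, IsCyc Q q → (∃ x ∈ q, PA x ∨ PB x) →
      rho Q PA PB q = q → (∑ m ∈ orbitF q, atL S₂ m) = atL S₂ q := by
    intro q hcy hsp hfix
    rw [Finset.sum_congr rfl (fun m _ => hS2at m), Finset.sum_comm, hS2at q]
    refine Finset.sum_congr rfl fun k _ => ?_
    rw [Finset.sum_ite_eq' (orbitF q) ([a k, b k]) (fun _ => (1:ℂ))]
    by_cases hqk : q = [a k, b k]
    · rw [if_pos (by rw [hqk]; exact self_mem_orbitF (by simp)), if_pos hqk]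
    · rw [if_neg, if_neg hqk]
      intro hmem
      apply hqk
      have h1 : rho Q PA PB [a k, b k] = rho Q PA PB q :=
        rho_eq_rho_of_mem_orbitF hmem ⟨hcy, hsp⟩
      rw [hrhoab k, hfix] at h1
      exact h1.symm
  -- the key vanishing statement
  have hkey : ∀ l : Q.PathsPos, (∃ x ∈ l.1, PA x ∨ PB x) → l.1.length < ℓ + 2 →
      gt (Sum.inr l) = S₂ (Sum.inr l) := by
    intro l hsp hlen
    by_cases hcyc : IsCyc Q l.1
    · by_cases hfix : rho Q PA PB l.1 = l.1
      · rw [hgteq l ⟨hcyc, hsp⟩ hfix]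
        have hsplit : ∀ m ∈ orbitF l.1,
            atL g m = atL S₂ m + atL D m + atL W' m + atL Z m := by
          intro m _
          rw [hdec, atL_add, atL_add, atL_add]
        rw [Finset.sum_congr rfl hsplit, Finset.sum_add_distrib, Finset.sum_add_distrib,
          Finset.sum_add_distrib, hclassS2 l.1 hcyc hsp hfix, hclassD l.1 hcyc,
          hclassW' l.1 hsp, hclassZ l.1 hlen, add_zero, add_zero, add_zero, atL_eq]
      · rw [hgtne l ⟨hcyc, hsp⟩ hfix, hS2inr]
        symm
        refine Finset.sum_eq_zero fun k _ => ?_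
        rw [if_neg]
        intro h
        exact hfix (by rw [h, hrhoab k])
    · rw [hgtnc l hcyc, hgcyc l hcyc, hS2noncyc l hcyc]
  -- components of the new potential
  set hh : Q.CPA := gt - S₂ with hhdef
  have hhkey : ∀ m : List Q.A, (∃ x ∈ m, PA x ∨ PB x) → m.length < ℓ + 2 →
      atL hh m = 0 := by
    intro m hsp hlen
    rw [atL]
    split
    · rw [hhdef, Pi.sub_apply, hkey (toPP m ‹_›) hsp hlen, sub_self]
    · rfl
  set u' : Fin N → Q.CPA := fun k p =>
    Sum.elim (fun _ => (0:ℂ)) (fun l : Q.PathsPos => atL hh (a k :: l.1)) p with hu'def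
  set v' : Fin N → Q.CPA := fun k p =>
    Sum.elim (fun _ => (0:ℂ)) (fun l : Q.PathsPos => atL hh (b k :: l.1)) p with hv'def
  set W'' : Q.CPA := fun p =>
    Sum.elim (fun _ => (0:ℂ)) (fun l : Q.PathsPos =>
      if (∀ x ∈ l.1, ¬(PA x ∨ PB x)) then hh (Sum.inr l) else 0) p with hW''def
  have hu'v : ∀ k, ∀ p : Q.Pth, p.length < ℓ + 1 → u' k p = 0 := by
    intro k p hp
    cases p with
    | inl x => rfl
    | inr l =>
      show atL hh (a k :: l.1) = 0
      refine hhkey _ ⟨a k, by simp, Or.inl ⟨k, rfl⟩⟩ ?_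
      have : l.1.length < ℓ + 1 := hp
      simp only [List.length_cons]
      omega
  have hv'v : ∀ k, ∀ p : Q.Pth, p.length < ℓ + 1 → v' k p = 0 := by
    intro k p hp
    cases p with
    | inl x => rfl
    | inr l =>
      show atL hh (b k :: l.1) = 0
      refine hhkey _ ⟨b k, by simp, Or.inr ⟨k, rfl⟩⟩ ?_
      have : l.1.length < ℓ + 1 := hp
      simp only [List.length_cons]
      omega
  have hW''3 : ∀ p : Q.Pth, p.length < 3 → W'' p = 0 := by
    intro p hp
    cases p with
    | inl x => rfl
    | inr l =>
      show (if (∀ x ∈ l.1, ¬(PA x ∨ PB x)) then hh (Sum.inr l) else 0) = 0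
      split
      case isTrue hfree =>
        rw [hhdef, Pi.sub_apply]
        have hgt : gt (Sum.inr l) = g (Sum.inr l) :=
          hgtnospec l (by push_neg; exact fun x hx => not_or.mp (hfree x hx))
        rw [hgt, hdec]
        show (S₂ + D + W' + Z) (Sum.inr l) - S₂ (Sum.inr l) = 0
        rw [Pi.add_apply, Pi.add_apply, Pi.add_apply]
        have hD0 : D (Sum.inr l) = 0 := by
          rw [hDdef, Finset.sum_apply]
          refine Finset.sum_eq_zero fun k _ => ?_
          rw [Pi.sub_apply, conv_arrow_left, conv_arrow_right]
          rw [if_neg, if_neg, sub_zero]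
          · intro h
            exact hfree _ (List.getLast_mem l.2.1) (Or.inr ⟨k, h⟩)
          · intro h
            exact hfree _ (List.head_mem l.2.1) (Or.inr ⟨k, h⟩)
        have hW'0 : W' (Sum.inr l) = 0 := hW'm3 _ hp
        have hZ0 : Z (Sum.inr l) = 0 := hZv _ (by
          have h3 : l.1.length < 3 := hp
          show l.1.length < ℓ + 2
          omega)
        rw [hD0, hW'0, hZ0, add_zero, add_zero, add_zero, sub_self]
      case isFalse _ => rfl
  have hW''avoid : ∀ (l : Q.PathsPos) (k : Fin N),
      a k ∈ l.1 ∨ b k ∈ l.1 → W'' (Sum.inr l) = 0 := by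
    intro l k hk
    show (if (∀ x ∈ l.1, ¬(PA x ∨ PB x)) then hh (Sum.inr l) else 0) = 0
    rw [if_neg]
    push_neg
    rcases hk with hk | hk
    · exact ⟨a k, hk, Or.inl ⟨k, rfl⟩⟩
    · exact ⟨b k, hk, Or.inr ⟨k, rfl⟩⟩
  -- the partition identity
  have hconva : ∀ k (l : Q.PathsPos), Q.conv (Q.arrowδ (a k)) (u' k) (Sum.inr l)
      = if l.1.head l.2.1 = a k then hh (Sum.inr l) else 0 := by
    intro k l
    rw [conv_arrow_left]
    by_cases hhead : l.1.head l.2.1 = a k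
    · rw [if_pos hhead, if_pos hhead]
      by_cases htl : l.1.tail = []
      · rw [htl]
        have hl1 : l.1 = [a k] := by
          have h0 := List.cons_head_tail l.2.1
          rw [hhead, htl] at h0
          exact h0.symm
        have hrhs : hh (Sum.inr l) = 0 := by
          have h1 := hhkey l.1 (⟨a k, by rw [hl1]; simp, Or.inl ⟨k, rfl⟩⟩)
            (by rw [hl1]; show 1 < ℓ + 2; omega)
          rwa [atL_eq] at h1
        rw [hrhs]
        show Q.coefAt (u' k) _ [] = 0
        rw [Quiv.coefAt, dif_pos rfl]
        rfl
      · rw [coefAt_of_ne _ _ _ htl]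
        have hvt : Valid Q l.1.tail := ⟨htl, l.2.2.tail⟩
        rw [atL, dif_pos hvt]
        show atL hh (a k :: l.1.tail) = hh (Sum.inr l)
        have hl1 : a k :: l.1.tail = l.1 := by
          conv_rhs => rw [← List.cons_head_tail l.2.1]
          rw [hhead]
        rw [hl1, atL_eq]
    · rw [if_neg hhead, if_neg hhead]
  have hconvb : ∀ k (l : Q.PathsPos), Q.conv (Q.arrowδ (b k)) (v' k) (Sum.inr l)
      = if l.1.head l.2.1 = b k then hh (Sum.inr l) else 0 := by
    intro k l
    rw [conv_arrow_left]
    by_cases hhead : l.1.head l.2.1 = b k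
    · rw [if_pos hhead, if_pos hhead]
      by_cases htl : l.1.tail = []
      · rw [htl]
        have hl1 : l.1 = [b k] := by
          have h0 := List.cons_head_tail l.2.1
          rw [hhead, htl] at h0
          exact h0.symm
        have hrhs : hh (Sum.inr l) = 0 := by
          have h1 := hhkey l.1 (⟨b k, by rw [hl1]; simp, Or.inr ⟨k, rfl⟩⟩)
            (by rw [hl1]; show 1 < ℓ + 2; omega)
          rwa [atL_eq] at h1
        rw [hrhs]
        show Q.coefAt (v' k) _ [] = 0
        rw [Quiv.coefAt, dif_pos rfl]
        rfl
      · rw [coefAt_of_ne _ _ _ htl]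
        have hvt : Valid Q l.1.tail := ⟨htl, l.2.2.tail⟩
        rw [atL, dif_pos hvt]
        show atL hh (b k :: l.1.tail) = hh (Sum.inr l)
        have hl1 : b k :: l.1.tail = l.1 := by
          conv_rhs => rw [← List.cons_head_tail l.2.1]
          rw [hhead]
        rw [hl1, atL_eq]
    · rw [if_neg hhead, if_neg hhead]
  have hpart : S₂ + (∑ k, (Q.conv (Q.arrowδ (a k)) (u' k)
      + Q.conv (Q.arrowδ (b k)) (v' k))) + W'' = gt := by
    have harr0 : ∀ (c : Q.A) (x : V), Q.arrowδ c (Sum.inl x) = 0 := fun c x => by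
      rw [Quiv.arrowδ, if_neg (by simp)]
    funext p
    cases p with
    | inl x =>
      rw [Pi.add_apply, Pi.add_apply, Finset.sum_apply]
      have h1 : S₂ (Sum.inl x) = 0 := hS2v _ (by show (0:ℕ) < 2; omega)
      have h2 : ∀ k ∈ (Finset.univ : Finset (Fin N)),
          (Q.conv (Q.arrowδ (a k)) (u' k) + Q.conv (Q.arrowδ (b k)) (v' k))
            (Sum.inl x) = 0 := by
        intro k _
        rw [Pi.add_apply]
        show Q.arrowδ (a k) (Sum.inl x) * u' k (Sum.inl x)
          + Q.arrowδ (b k) (Sum.inl x) * v' k (Sum.inl x) = 0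
        rw [harr0, harr0, zero_mul, zero_mul, add_zero]
      have h3 : W'' (Sum.inl x) = 0 := rfl
      rw [h1, Finset.sum_eq_zero h2, h3, hgtinl, add_zero, add_zero]
    | inr l =>
      rw [Pi.add_apply, Pi.add_apply, Finset.sum_apply]
      have hterm : ∀ k ∈ (Finset.univ : Finset (Fin N)),
          (Q.conv (Q.arrowδ (a k)) (u' k) + Q.conv (Q.arrowδ (b k)) (v' k)) (Sum.inr l)
          = (if l.1.head l.2.1 = a k then hh (Sum.inr l) else 0)
            + (if l.1.head l.2.1 = b k then hh (Sum.inr l) else 0) := by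
        intro k _
        rw [Pi.add_apply, hconva, hconvb]
      rw [Finset.sum_congr rfl hterm, Finset.sum_add_distrib]
      by_cases hA : ∃ j, l.1.head l.2.1 = a j
      · obtain ⟨j, hj⟩ := hA
        have hsum1 : (∑ k, if l.1.head l.2.1 = a k then hh (Sum.inr l) else 0)
            = hh (Sum.inr l) := by
          rw [Finset.sum_eq_single_of_mem j (Finset.mem_univ j)]
          · rw [if_pos hj]
          · intro k _ hkj
            rw [if_neg]
            intro h
            exact hkj (haa k j (h.symm.trans hj))
        have hsum2 : (∑ k, if l.1.head l.2.1 = b k then hh (Sum.inr l) else 0) = 0 :=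
          Finset.sum_eq_zero fun k _ => by
            rw [if_neg]; intro h; exact hab j k (hj.symm.trans h)
        have hW''0 : W'' (Sum.inr l) = 0 := by
          show (if (∀ x ∈ l.1, ¬(PA x ∨ PB x)) then hh (Sum.inr l) else 0) = 0
          rw [if_neg]
          push_neg
          exact ⟨l.1.head l.2.1, List.head_mem l.2.1, Or.inl ⟨j, hj⟩⟩
        rw [hsum1, hsum2, hW''0, hhdef, Pi.sub_apply]
        ring
      · by_cases hB : ∃ j, l.1.head l.2.1 = b j
        · obtain ⟨j, hj⟩ := hB
          have hsum1 : (∑ k, if l.1.head l.2.1 = a k then hh (Sum.inr l) else 0) = 0 :=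
            Finset.sum_eq_zero fun k _ => by
              rw [if_neg]; intro h; exact hA ⟨k, h⟩
          have hsum2 : (∑ k, if l.1.head l.2.1 = b k then hh (Sum.inr l) else 0)
              = hh (Sum.inr l) := by
            rw [Finset.sum_eq_single_of_mem j (Finset.mem_univ j)]
            · rw [if_pos hj]
            · intro k _ hkj
              rw [if_neg]
              intro h
              exact hkj (hbb k j (h.symm.trans hj))
          have hW''0 : W'' (Sum.inr l) = 0 := by
            show (if (∀ x ∈ l.1, ¬(PA x ∨ PB x)) then hh (Sum.inr l) else 0) = 0
            rw [if_neg]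
            push_neg
            exact ⟨l.1.head l.2.1, List.head_mem l.2.1, Or.inr ⟨j, hj⟩⟩
          rw [hsum1, hsum2, hW''0, hhdef, Pi.sub_apply]
          ring
        · have hsum1 : (∑ k, if l.1.head l.2.1 = a k then hh (Sum.inr l) else 0) = 0 :=
            Finset.sum_eq_zero fun k _ => by
              rw [if_neg]; intro h; exact hA ⟨k, h⟩
          have hsum2 : (∑ k, if l.1.head l.2.1 = b k then hh (Sum.inr l) else 0) = 0 :=
            Finset.sum_eq_zero fun k _ => by
              rw [if_neg]; intro h; exact hB ⟨k, h⟩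
          by_cases hsp : ∃ x ∈ l.1, PA x ∨ PB x
          · have hW''0 : W'' (Sum.inr l) = 0 := by
              show (if (∀ x ∈ l.1, ¬(PA x ∨ PB x)) then hh (Sum.inr l) else 0) = 0
              rw [if_neg]
              push_neg
              exact hsp
            have hgtS : gt (Sum.inr l) = S₂ (Sum.inr l) := by
              by_cases hcyc : IsCyc Q l.1
              · have hne : rho Q PA PB l.1 ≠ l.1 := by
                  intro heq
                  obtain ⟨-, h', hPor⟩ := rho_spec (Q := Q) (PA := PA) (PB := PB)
                    ⟨hcyc, hsp⟩
                  have hhc : (rho Q PA PB l.1).head h' = l.1.head l.2.1 :=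
                    head_congr heq h' l.2.1
                  rw [hhc] at hPor
                  rcases hPor with hP | hP
                  · obtain ⟨j, hj⟩ := hP
                    exact hA ⟨j, hj⟩
                  · obtain ⟨j, hj⟩ := hP
                    exact hB ⟨j, hj⟩
                rw [hgtne l ⟨hcyc, hsp⟩ hne, hS2inr]
                symm
                refine Finset.sum_eq_zero fun k _ => ?_
                rw [if_neg]
                intro h
                apply hA
                refine ⟨k, ?_⟩
                have h1 : l.1.head? = some (l.1.head l.2.1) := List.head?_eq_head l.2.1
                have h2 : l.1.head? = some (a k) := by rw [h]; rfl
                exact Option.some.inj (h1.symm.trans h2)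
              · rw [hgtnc l hcyc, hgcyc l hcyc, hS2noncyc l hcyc]
            rw [hsum1, hsum2, hW''0, hgtS]
            ring
          · have hW''0 : W'' (Sum.inr l) = hh (Sum.inr l) := by
              show (if (∀ x ∈ l.1, ¬(PA x ∨ PB x)) then hh (Sum.inr l) else 0) = _
              rw [if_pos]
              push_neg at hsp
              exact fun x hx => not_or.mpr (hsp x hx)
            rw [hsum1, hsum2, hW''0, hhdef, Pi.sub_apply]
            ring
  -- conclusion
  refine ⟨ℓ + 1, by omega, u', v', W'', hu'v, hv'v, hW''3, hW''avoid, ?_⟩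
  show (g - (S₂ + _ + W'')) ∈ Q.mAdicCl _
  rw [hpart]
  intro n
  refine ⟨∑ m ∈ listsLt Q n, atL g m • (pδ Q m - pδ Q (rho Q PA PB m)), ?_, ?_⟩
  · rw [SetLike.mem_coe]
    refine Submodule.sum_smul_mem _ _ fun m _ => ?_
    by_cases hc : IsCyc Q m ∧ ∃ x ∈ m, PA x ∨ PB x
    · rcases rho_mem_orbitF (Q := Q) (PA := PA) (PB := PB) (l := m) with hm | hm
      · obtain ⟨i, -, hi⟩ := mem_orbitF.mp hm
        rw [← hi]
        exact span_rot hc.1 i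
      · rw [hm, sub_self]
        exact Submodule.zero_mem _
    · rw [rho_eq_self_of_not hc, sub_self]
      exact Submodule.zero_mem _
  · intro p hp
    cases p with
    | inl x =>
      rw [Pi.sub_apply, Finset.sum_apply]
      have h1 : gt (Sum.inl x) = g (Sum.inl x) := rfl
      rw [h1, sub_self]
      symm
      refine Finset.sum_eq_zero fun m _ => ?_
      rw [Pi.smul_apply, Pi.sub_apply, pδ_inl, pδ_inl, sub_self, smul_zero]
    | inr l =>
      rw [Pi.sub_apply, Finset.sum_apply]
      have hlen : l.1.length < n := hp
      have hterm : ∀ m ∈ listsLt Q n,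
          (atL g m • (pδ Q m - pδ Q (rho Q PA PB m))) (Sum.inr l)
          = atL g m * (if l.1 = m then 1 else 0)
            - atL g m * (if l.1 = rho Q PA PB m then 1 else 0) := by
        intro m _
        rw [Pi.smul_apply, Pi.sub_apply, pδ_inr, pδ_inr, smul_eq_mul, mul_sub]
      rw [Finset.sum_congr rfl hterm, Finset.sum_sub_distrib]
      have hfst : (∑ m ∈ listsLt Q n, atL g m * (if l.1 = m then 1 else 0))
          = g (Sum.inr l) := by
        rw [Finset.sum_eq_single_of_mem l.1 (mem_listsLt.mpr hlen)]
        · rw [if_pos rfl, mul_one, atL_eq]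
        · intro m _ hm
          rw [if_neg (fun h => hm h.symm), mul_zero]
      have hsnd : (∑ m ∈ listsLt Q n,
          atL g m * (if l.1 = rho Q PA PB m then 1 else 0)) = gt (Sum.inr l) := by
        rw [hgtinr]
        have hFG : ∀ m, atL g m * (if l.1 = rho Q PA PB m then 1 else 0)
            = (if rho Q PA PB m = l.1 then atL g m else 0) := by
          intro m
          by_cases h : rho Q PA PB m = l.1
          · rw [if_pos h, if_pos h.symm, mul_one]
          · rw [if_neg h, if_neg (fun hh2 => h hh2.symm), mul_zero]
        rw [Finset.sum_congr rfl (fun m _ => hFG m)]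
        symm
        apply Finset.sum_subset
        · intro m hm
          exact mem_listsLt.mpr (by rw [length_of_mem_orbitF hm]; exact hlen)
        · intro m _ hnm
          rw [if_neg]
          intro heq
          apply hnm
          rcases rho_mem_orbitF (Q := Q) (PA := PA) (PB := PB) (l := m) with h | h
          · rw [heq] at h
            exact mem_orbitF_symm h
          · have hml : m = l.1 := h.symm.trans heq
            rw [hml]
            exact self_mem_orbitF l.2.1
      rw [hfst, hsnd]
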